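/- arXiv:2605.21717 — 4 statements merged into one kernel-verified Lean document; each statement's English description precedes it below -/
import Mathlib

section
/- Let π be a positive, integrable joint probability density of the variables (x_r, x_⊥, y_s, y_⊥), with all marginal and conditional densities positive, and write x = (x_r, x_⊥), y = (y_s, y_⊥). Then for every y with π(y) > 0, assuming the integral exists, ∫ π(x | y) i(x_⊥; y_⊥ | x_r, y_s) dx ≥ 0; indeed this integral equals ∫ π(x_r | y) D_KL( π(· | x_r, y) ‖ π(· | x_r, y_s) ) dx_r, an expectation of Kullback–Leibler divergences between conditional densities of x_⊥, and hence is nonnegative. -/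
open MeasureTheory

/-- the expected conditional pointwise mutual information
`∫ π(x|y) i(x_⊥; y_⊥ | x_r, y_s) dx` equals an expectation of KL divergences between
conditional densities of `x_⊥`, and hence is nonnegative. -/
theorem stmt3 {a b c e : ℕ}
    (π : (Fin a → ℝ) → (Fin b → ℝ) → (Fin c → ℝ) → (Fin e → ℝ) → ℝ)
    (hπpos : ∀ xr xp ys yp, 0 < π xr xp ys yp)
    (hπint : (∫ xr : Fin a → ℝ, ∫ xp : Fin b → ℝ, ∫ ys : Fin c → ℝ, ∫ yp : Fin e → ℝ,
      π xr xp ys yp) = 1)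
    -- marginal densities obtained by integrating out the remaining variables
    (margY : (Fin c → ℝ) → (Fin e → ℝ) → ℝ)
    (hmargY : ∀ ys yp, margY ys yp = ∫ xr : Fin a → ℝ, ∫ xp : Fin b → ℝ, π xr xp ys yp)
    (margXrYs : (Fin a → ℝ) → (Fin c → ℝ) → ℝ)
    (hmargXrYs : ∀ xr ys, margXrYs xr ys = ∫ xp : Fin b → ℝ, ∫ yp : Fin e → ℝ, π xr xp ys yp)
    (margXYs : (Fin a → ℝ) → (Fin b → ℝ) → (Fin c → ℝ) → ℝ)
    (hmargXYs : ∀ xr xp ys, margXYs xr xp ys = ∫ yp : Fin e → ℝ, π xr xp ys yp)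
    (margXrY : (Fin a → ℝ) → (Fin c → ℝ) → (Fin e → ℝ) → ℝ)
    (hmargXrY : ∀ xr ys yp, margXrY xr ys yp = ∫ xp : Fin b → ℝ, π xr xp ys yp)
    -- positivity of all marginal densities
    (hmargYpos : ∀ ys yp, 0 < margY ys yp)
    (hmargXrYspos : ∀ xr ys, 0 < margXrYs xr ys)
    (hmargXYspos : ∀ xr xp ys, 0 < margXYs xr xp ys)
    (hmargXrYpos : ∀ xr ys yp, 0 < margXrY xr ys yp)
    -- the observation y = (y_s, y_⊥) with π(y) > 0
    (ys : Fin c → ℝ) (yp : Fin e → ℝ) (hy : 0 < margY ys yp)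
    -- existence of the integrals
    (hint1 : ∀ xr : Fin a → ℝ, Integrable (fun xp : Fin b → ℝ =>
      (π xr xp ys yp / margY ys yp) *
        Real.log ((π xr xp ys yp / margXrYs xr ys) /
          ((margXYs xr xp ys / margXrYs xr ys) * (margXrY xr ys yp / margXrYs xr ys)))))
    (hint2 : Integrable (fun xr : Fin a → ℝ => ∫ xp : Fin b → ℝ,
      (π xr xp ys yp / margY ys yp) *
        Real.log ((π xr xp ys yp / margXrYs xr ys) /
          ((margXYs xr xp ys / margXrYs xr ys) * (margXrY xr ys yp / margXrYs xr ys))))) :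
    ((∫ xr : Fin a → ℝ, ∫ xp : Fin b → ℝ,
        (π xr xp ys yp / margY ys yp) *
          Real.log ((π xr xp ys yp / margXrYs xr ys) /
            ((margXYs xr xp ys / margXrYs xr ys) * (margXrY xr ys yp / margXrYs xr ys))))
      = ∫ xr : Fin a → ℝ, (margXrY xr ys yp / margY ys yp) *
          ∫ xp : Fin b → ℝ, (π xr xp ys yp / margXrY xr ys yp) *
            Real.log ((π xr xp ys yp / margXrY xr ys yp) /
              (margXYs xr xp ys / margXrYs xr ys)))
    ∧ 0 ≤ ∫ xr : Fin a → ℝ, ∫ xp : Fin b → ℝ,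
        (π xr xp ys yp / margY ys yp) *
          Real.log ((π xr xp ys yp / margXrYs xr ys) /
            ((margXYs xr xp ys / margXrYs xr ys) * (margXrY xr ys yp / margXrYs xr ys))) := by

  have intpos : ∀ {f : (Fin b → ℝ) → ℝ}, 0 < (∫ x, f x) → Integrable f := by
    intro f h
    by_contra h'
    rw [integral_undef h'] at h
    exact lt_irrefl 0 h
  -- pointwise identity of the integrands
  have key : ∀ xr xp,
      (π xr xp ys yp / margY ys yp) *
          Real.log ((π xr xp ys yp / margXrYs xr ys) /
            ((margXYs xr xp ys / margXrYs xr ys) * (margXrY xr ys yp / margXrYs xr ys)))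
        = (margXrY xr ys yp / margY ys yp) *
            ((π xr xp ys yp / margXrY xr ys yp) *
              Real.log ((π xr xp ys yp / margXrY xr ys yp) /
                (margXYs xr xp ys / margXrYs xr ys))) := by
    intro xr xp
    have h1 := (hπpos xr xp ys yp).ne'
    have h2 := (hmargXrYs xr ys ▸ hmargXrYspos xr ys).ne'
    have h2' := (hmargXrYspos xr ys).ne'
    have h3 := (hmargXYspos xr xp ys).ne'
    have h4 := (hmargXrYpos xr ys yp).ne'
    have h5 := (hmargYpos ys yp).ne'
    have hlog : ((π xr xp ys yp / margXrYs xr ys) /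
          ((margXYs xr xp ys / margXrYs xr ys) * (margXrY xr ys yp / margXrYs xr ys)))
        = ((π xr xp ys yp / margXrY xr ys yp) / (margXYs xr xp ys / margXrYs xr ys)) := by
      field_simp
    rw [hlog]
    field_simp
  have eq1 : (∫ xr : Fin a → ℝ, ∫ xp : Fin b → ℝ,
        (π xr xp ys yp / margY ys yp) *
          Real.log ((π xr xp ys yp / margXrYs xr ys) /
            ((margXYs xr xp ys / margXrYs xr ys) * (margXrY xr ys yp / margXrYs xr ys))))
      = ∫ xr : Fin a → ℝ, (margXrY xr ys yp / margY ys yp) *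
          ∫ xp : Fin b → ℝ, (π xr xp ys yp / margXrY xr ys yp) *
            Real.log ((π xr xp ys yp / margXrY xr ys yp) /
              (margXYs xr xp ys / margXrYs xr ys)) := by
    simp_rw [key, integral_const_mul]
  refine ⟨eq1, ?_⟩
  rw [eq1]
  apply integral_nonneg
  intro xr
  have hmy := hmargYpos ys yp
  have hmxy := hmargXrYpos xr ys yp
  apply mul_nonneg (div_nonneg hmxy.le hmy.le)
  -- now the KL divergence for fixed xr
  set F : (Fin b → ℝ) → ℝ := fun xp => π xr xp ys yp / margXrY xr ys yp with hF
  set G : (Fin b → ℝ) → ℝ := fun xp => margXYs xr xp ys / margXrYs xr ys with hG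
  show (0:ℝ) ≤ ∫ xp : Fin b → ℝ, F xp * Real.log (F xp / G xp)
  have hFpos : ∀ xp, 0 < F xp := fun xp => div_pos (hπpos xr xp ys yp) hmxy
  have hGpos : ∀ xp, 0 < G xp := fun xp => div_pos (hmargXYspos xr xp ys) (hmargXrYspos xr ys)
  have hfint : Integrable (fun xp => π xr xp ys yp) := by
    apply intpos
    rw [← hmargXrY]
    exact hmxy
  have hgint0 : Integrable (fun xp => margXYs xr xp ys) := by
    apply intpos
    have : (∫ xp, margXYs xr xp ys) = margXrYs xr ys := by
      simp_rw [hmargXYs]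
      rw [← hmargXrYs]
    rw [this]
    exact hmargXrYspos xr ys
  have hFint : Integrable F := hfint.div_const _
  have hGint : Integrable G := hgint0.div_const _
  have hF1 : (∫ xp, F xp) = 1 := by
    simp only [hF]
    rw [integral_div, ← hmargXrY, div_self hmxy.ne']
  have hG1 : (∫ xp, G xp) = 1 := by
    simp only [hG]
    rw [integral_div]
    have : (∫ xp, margXYs xr xp ys) = margXrYs xr ys := by
      simp_rw [hmargXYs]
      rw [← hmargXrYs]
    rw [this, div_self (hmargXrYspos xr ys).ne']
  have hhint : Integrable (fun xp => F xp * Real.log (F xp / G xp)) := by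
    have := (hint1 xr).const_mul (margY ys yp / margXrY xr ys yp)
    apply this.congr
    filter_upwards with xp
    rw [key xr xp]
    simp only [hF, hG]
    field_simp
  have hptw : ∀ xp, F xp - G xp ≤ F xp * Real.log (F xp / G xp) := by
    intro xp
    have hf := hFpos xp
    have hg := hGpos xp
    have h1 : Real.log (G xp / F xp) ≤ G xp / F xp - 1 :=
      Real.log_le_sub_one_of_pos (div_pos hg hf)
    have h2 : F xp * Real.log (G xp / F xp) ≤ G xp - F xp := by
      have := mul_le_mul_of_nonneg_left h1 hf.le
      have hcancel : F xp * (G xp / F xp) = G xp := by field_simp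
      calc F xp * Real.log (G xp / F xp) ≤ F xp * (G xp / F xp - 1) := this
        _ = G xp - F xp := by rw [mul_sub, mul_one, hcancel]
    have h3 : Real.log (F xp / G xp) = -Real.log (G xp / F xp) := by
      rw [Real.log_div hf.ne' hg.ne', Real.log_div hg.ne' hf.ne']
      ring
    rw [h3]
    nlinarith
  have := integral_mono (hFint.sub hGint) hhint hptw
  simp only [Pi.sub_apply] at this
  rw [integral_sub hFint hGint, hF1, hG1] at this
  linarith
end

section
/- Let π(x, y) be a positive, integrable joint probability density on ℝ^{d_x} × ℝ^{d_y}, and let [U_r, U_⊥] and [V_s, V_⊥] be orthogonal matrices of sizes d_x × d_x and d_y × d_y, with U_r having r columns and V_s having s columns; write x_r = U_rᵀx, x_⊥ = U_⊥ᵀx, y_s = V_sᵀy, y_⊥ = V_⊥ᵀy. Then for every y with π(y) > 0, assuming all integrals below are finite, the Kullback–Leibler divergence between the true posterior π(x | y) and the reduced posterior π*(x | y) := π(y_s | x_r) π(x) / π(y_s) is bounded as D_KL(π(· | y) ‖ π*(· | y)) ≤ ∫ π(x | y) i(x_⊥; y | x_r) dx + ∫ π(x | y) i(x; y_⊥ |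 y_s) dx. -/
open MeasureTheory Matrix
open scoped ENNReal

lemma my_integrable_of_integral_pos {α : Type*} [MeasurableSpace α] {μ : Measure α}
    {f : α → ℝ} (h : 0 < ∫ x, f x ∂μ) : Integrable f μ := by
  by_contra hc
  rw [integral_undef hc] at h
  exact lt_irrefl _ h

lemma my_card_eq {dx r rp : ℕ}
    (Ur : Matrix (Fin dx) (Fin r) ℝ) (Up : Matrix (Fin dx) (Fin rp) ℝ)
    (hU1 : Urᵀ * Ur = 1) (hU2 : Upᵀ * Up = 1)
    (hU4 : Ur * Urᵀ + Up * Upᵀ = 1) : r + rp = dx := by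
  have h := congrArg Matrix.trace hU4
  rw [Matrix.trace_add, Matrix.trace_mul_comm Ur Urᵀ, Matrix.trace_mul_comm Up Upᵀ,
    hU1, hU2, Matrix.trace_one, Matrix.trace_one, Matrix.trace_one] at h
  simp only [Fintype.card_fin] at h
  exact_mod_cast h

lemma my_key_cov {dx r rp : ℕ}
    (Ur : Matrix (Fin dx) (Fin r) ℝ) (Up : Matrix (Fin dx) (Fin rp) ℝ)
    (hU1 : Urᵀ * Ur = 1) (hU2 : Upᵀ * Up = 1) (hU3 : Urᵀ * Up = 0)
    (hU4 : Ur * Urᵀ + Up * Upᵀ = 1)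
    (f : (Fin dx → ℝ) → ℝ≥0∞) (hf : AEMeasurable f (volume : Measure (Fin dx → ℝ))) :
    ∫⁻ x, f x = ∫⁻ xr : Fin r → ℝ, ∫⁻ xp : Fin rp → ℝ, f (Ur *ᵥ xr + Up *ᵥ xp) := by
  classical
  have hdx : r + rp = dx := my_card_eq Ur Up hU1 hU2 hU4
  set e : Fin r ⊕ Fin rp ≃ Fin dx := finSumFinEquiv.trans (finCongr hdx) with he
  set W : Matrix (Fin dx) (Fin r ⊕ Fin rp) ℝ := fromCols Ur Up with hW
  set M : Matrix (Fin dx) (Fin dx) ℝ := W.submatrix id ⇑e.symm with hM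
  have hU3' : Upᵀ * Ur = 0 := by
    have := congrArg Matrix.transpose hU3
    simpa [Matrix.transpose_mul] using this
  have hWtW : Wᵀ * W = 1 := by
    rw [hW, transpose_fromCols, fromRows_mul_fromCols, hU1, hU2, hU3, hU3',
      ← Matrix.fromBlocks_one]
  have hMtM : Mᵀ * M = 1 := by
    have h := Matrix.submatrix_mul_equiv Wᵀ W ⇑e.symm (Equiv.refl (Fin dx)) ⇑e.symm
    simpa [hM, hWtW, Matrix.transpose_submatrix, Matrix.submatrix_one_equiv] using h
  have hMMt : M * Mᵀ = 1 := mul_eq_one_comm.mp hMtM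
  have hdet2 : M.det * M.det = 1 := by
    have := congrArg Matrix.det hMtM
    rwa [Matrix.det_mul, Matrix.det_transpose, Matrix.det_one] at this
  have hdetne : M.det ≠ 0 := by
    intro h; rw [h, mul_zero] at hdet2; exact zero_ne_one hdet2
  have habs : |M.det| = 1 := by
    rcases mul_self_eq_one_iff.mp hdet2 with h | h <;> rw [h] <;> norm_num
  have hmeas : Measurable (Matrix.toLin' M) :=
    (LinearMap.continuous_of_finiteDimensional _).measurable
  have hmeas' : Measurable (Matrix.toLin' Mᵀ) :=
    (LinearMap.continuous_of_finiteDimensional _).measurable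
  let Teq : (Fin dx → ℝ) ≃ᵐ (Fin dx → ℝ) :=
  { toFun := Matrix.toLin' M
    invFun := Matrix.toLin' Mᵀ
    left_inv := fun v => by
      simp [Matrix.toLin'_apply, Matrix.mulVec_mulVec, hMtM, Matrix.one_mulVec]
    right_inv := fun v => by
      simp [Matrix.toLin'_apply, Matrix.mulVec_mulVec, hMMt, Matrix.one_mulVec]
    measurable_toFun := hmeas
    measurable_invFun := hmeas' }
  have hTmp : MeasurePreserving Teq volume volume := by
    refine ⟨hmeas, ?_⟩
    show Measure.map (Matrix.toLin' M) volume = volume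
    rw [Real.map_matrix_volume_pi_eq_smul_volume_pi hdetne]
    rw [abs_inv, habs]
    norm_num
  let seq : ((Fin r → ℝ) × (Fin rp → ℝ)) ≃ᵐ (Fin r ⊕ Fin rp → ℝ) :=
    (MeasurableEquiv.sumPiEquivProdPi (fun _ : Fin r ⊕ Fin rp => ℝ)).symm
  have hsmp : MeasurePreserving seq volume volume :=
    volume_measurePreserving_sumPiEquivProdPi_symm _
  let ceq : (Fin r ⊕ Fin rp → ℝ) ≃ᵐ (Fin dx → ℝ) :=
    MeasurableEquiv.piCongrLeft (fun _ => ℝ) e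
  have hcmp : MeasurePreserving ceq volume volume :=
    volume_measurePreserving_piCongrLeft _ e
  let G : ((Fin r → ℝ) × (Fin rp → ℝ)) ≃ᵐ (Fin dx → ℝ) := seq.trans (ceq.trans Teq)
  have hGmp : MeasurePreserving G volume volume :=
    (hTmp.comp hcmp).comp hsmp
  have hGeq : ∀ p : (Fin r → ℝ) × (Fin rp → ℝ), G p = Ur *ᵥ p.1 + Up *ᵥ p.2 := by
    intro p
    show Matrix.toLin' M (ceq (seq p)) = _
    rw [Matrix.toLin'_apply, hM, Matrix.submatrix_mulVec_equiv]
    have h1 : ((ceq (seq p)) ∘ ⇑e.symm.symm) = Sum.elim p.1 p.2 := by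
      funext k
      simp only [Equiv.symm_symm, Function.comp_apply]
      show (MeasurableEquiv.piCongrLeft (fun _ : Fin dx => ℝ) e) (seq p) (e k)
        = Sum.elim p.1 p.2 k
      rw [MeasurableEquiv.piCongrLeft_apply_apply (β := fun _ : Fin dx => ℝ) e (seq p) k]
      cases k with
      | inl i => rfl
      | inr i => rfl
    rw [h1]
    simp [hW]
  have step1 : ∫⁻ x, f x = ∫⁻ p : (Fin r → ℝ) × (Fin rp → ℝ), f (G p) :=
    (hGmp.lintegral_comp_emb G.measurableEmbedding f).symm
  have hfG : AEMeasurable (fun p : (Fin r → ℝ) × (Fin rp → ℝ) => f (G p))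
      ((volume : Measure (Fin r → ℝ)).prod (volume : Measure (Fin rp → ℝ))) := by
    have := hf.comp_quasiMeasurePreserving hGmp.quasiMeasurePreserving
    rwa [Measure.volume_eq_prod] at this
  rw [step1, Measure.volume_eq_prod, lintegral_prod _ hfG]
  congr 1
  funext xr
  congr 1
  funext xp
  rw [hGeq (xr, xp)]


/-- the upper bound
`D_KL(π(·|y) ‖ π*(·|y)) ≤ ∫ π(x|y) i(x_⊥; y | x_r) dx + ∫ π(x|y) i(x; y_⊥ | y_s) dx`
for the reduced posterior `π*(x|y) = π(y_s|x_r) π(x) / π(y_s)`. -/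
theorem stmt4 {dx dy r rp s sp : ℕ}
    (π : (Fin dx → ℝ) → (Fin dy → ℝ) → ℝ)
    (hπpos : ∀ x y, 0 < π x y)
    (hπint : (∫ x : Fin dx → ℝ, ∫ y : Fin dy → ℝ, π x y) = 1)
    (Ur : Matrix (Fin dx) (Fin r) ℝ) (Up : Matrix (Fin dx) (Fin rp) ℝ)
    (Vs : Matrix (Fin dy) (Fin s) ℝ) (Vp : Matrix (Fin dy) (Fin sp) ℝ)
    (hU1 : Urᵀ * Ur = 1) (hU2 : Upᵀ * Up = 1) (hU3 : Urᵀ * Up = 0)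
    (hU4 : Ur * Urᵀ + Up * Upᵀ = 1)
    (hV1 : Vsᵀ * Vs = 1) (hV2 : Vpᵀ * Vp = 1) (hV3 : Vsᵀ * Vp = 0)
    (hV4 : Vs * Vsᵀ + Vp * Vpᵀ = 1)
    -- marginal densities obtained by integrating the (transported) joint density
    (margX : (Fin dx → ℝ) → ℝ) (hmargX : ∀ x, margX x = ∫ y : Fin dy → ℝ, π x y)
    (margY : (Fin dy → ℝ) → ℝ) (hmargY : ∀ y, margY y = ∫ x : Fin dx → ℝ, π x y)
    (margXrYs : (Fin r → ℝ) → (Fin s → ℝ) → ℝ)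
    (hmargXrYs : ∀ xr ys, margXrYs xr ys =
      ∫ xp : Fin rp → ℝ, ∫ yp : Fin sp → ℝ,
        π (Ur *ᵥ xr + Up *ᵥ xp) (Vs *ᵥ ys + Vp *ᵥ yp))
    (margXr : (Fin r → ℝ) → ℝ)
    (hmargXr : ∀ xr, margXr xr =
      ∫ xp : Fin rp → ℝ, ∫ ys : Fin s → ℝ, ∫ yp : Fin sp → ℝ,
        π (Ur *ᵥ xr + Up *ᵥ xp) (Vs *ᵥ ys + Vp *ᵥ yp))
    (margYs : (Fin s → ℝ) → ℝ)
    (hmargYs : ∀ ys, margYs ys =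
      ∫ xr : Fin r → ℝ, ∫ xp : Fin rp → ℝ, ∫ yp : Fin sp → ℝ,
        π (Ur *ᵥ xr + Up *ᵥ xp) (Vs *ᵥ ys + Vp *ᵥ yp))
    (margXYs : (Fin dx → ℝ) → (Fin s → ℝ) → ℝ)
    (hmargXYs : ∀ x ys, margXYs x ys = ∫ yp : Fin sp → ℝ, π x (Vs *ᵥ ys + Vp *ᵥ yp))
    (margXrY : (Fin r → ℝ) → (Fin dy → ℝ) → ℝ)
    (hmargXrY : ∀ xr y, margXrY xr y = ∫ xp : Fin rp → ℝ, π (Ur *ᵥ xr + Up *ᵥ xp) y)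
    -- positivity of all marginal densities
    (hmargXpos : ∀ x, 0 < margX x) (hmargYpos : ∀ y, 0 < margY y)
    (hmargXrYspos : ∀ xr ys, 0 < margXrYs xr ys)
    (hmargXrpos : ∀ xr, 0 < margXr xr) (hmargYspos : ∀ ys, 0 < margYs ys)
    (hmargXYspos : ∀ x ys, 0 < margXYs x ys)
    (hmargXrYpos : ∀ xr y, 0 < margXrY xr y)
    -- the observation
    (y : Fin dy → ℝ) (hy : 0 < margY y)
    -- finiteness of the integrals below
    (hintKL : Integrable (fun x : Fin dx → ℝ => (π x y / margY y) *
      Real.log ((π x y / margY y) /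
        (margXrYs (Urᵀ *ᵥ x) (Vsᵀ *ᵥ y) / margXr (Urᵀ *ᵥ x) * margX x /
          margYs (Vsᵀ *ᵥ y)))))
    (hint1 : Integrable (fun x : Fin dx → ℝ => (π x y / margY y) *
      Real.log ((π x y / margXr (Urᵀ *ᵥ x)) /
        ((margX x / margXr (Urᵀ *ᵥ x)) * (margXrY (Urᵀ *ᵥ x) y / margXr (Urᵀ *ᵥ x))))))
    (hint2 : Integrable (fun x : Fin dx → ℝ => (π x y / margY y) *
      Real.log ((π x y / margYs (Vsᵀ *ᵥ y)) /
        ((margXYs x (Vsᵀ *ᵥ y) / margYs (Vsᵀ *ᵥ y)) * (margY y / margYs (Vsᵀ *ᵥ y))))))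
    (hint3 : Integrable (fun x : Fin dx → ℝ => (π x y / margY y) *
      Real.log ((π x y / margXrYs (Urᵀ *ᵥ x) (Vsᵀ *ᵥ y)) /
        ((margXYs x (Vsᵀ *ᵥ y) / margXrYs (Urᵀ *ᵥ x) (Vsᵀ *ᵥ y)) *
          (margXrY (Urᵀ *ᵥ x) y / margXrYs (Urᵀ *ᵥ x) (Vsᵀ *ᵥ y)))))) :
    (∫ x : Fin dx → ℝ, (π x y / margY y) *
        Real.log ((π x y / margY y) /
          (margXrYs (Urᵀ *ᵥ x) (Vsᵀ *ᵥ y) / margXr (Urᵀ *ᵥ x) * margX x /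
            margYs (Vsᵀ *ᵥ y))))
      ≤ (∫ x : Fin dx → ℝ, (π x y / margY y) *
          Real.log ((π x y / margXr (Urᵀ *ᵥ x)) /
            ((margX x / margXr (Urᵀ *ᵥ x)) * (margXrY (Urᵀ *ᵥ x) y / margXr (Urᵀ *ᵥ x)))))
        + ∫ x : Fin dx → ℝ, (π x y / margY y) *
            Real.log ((π x y / margYs (Vsᵀ *ᵥ y)) /
              ((margXYs x (Vsᵀ *ᵥ y) / margYs (Vsᵀ *ᵥ y)) *
                (margY y / margYs (Vsᵀ *ᵥ y)))) := by
  classical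
  set ys : Fin s → ℝ := Vsᵀ *ᵥ y with hys
  -- the three integrands
  set f1 : (Fin dx → ℝ) → ℝ := fun x => (π x y / margY y) *
      Real.log ((π x y / margXr (Urᵀ *ᵥ x)) /
        ((margX x / margXr (Urᵀ *ᵥ x)) * (margXrY (Urᵀ *ᵥ x) y / margXr (Urᵀ *ᵥ x)))) with hf1
  set f2 : (Fin dx → ℝ) → ℝ := fun x => (π x y / margY y) *
      Real.log ((π x y / margYs ys) /
        ((margXYs x ys / margYs ys) * (margY y / margYs ys))) with hf2
  set f3 : (Fin dx → ℝ) → ℝ := fun x => (π x y / margY y) *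
      Real.log ((π x y / margXrYs (Urᵀ *ᵥ x) ys) /
        ((margXYs x ys / margXrYs (Urᵀ *ᵥ x) ys) *
          (margXrY (Urᵀ *ᵥ x) y / margXrYs (Urᵀ *ᵥ x) ys))) with hf3
  -- pointwise decomposition
  have hdecomp : ∀ x : Fin dx → ℝ,
      (π x y / margY y) *
        Real.log ((π x y / margY y) /
          (margXrYs (Urᵀ *ᵥ x) ys / margXr (Urᵀ *ᵥ x) * margX x / margYs ys))
      = f1 x + f2 x - f3 x := by
    intro x
    have hπ := hπpos x y
    have hmX := hmargXpos x
    have hmY := hmargYpos y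
    have hmRS := hmargXrYspos (Urᵀ *ᵥ x) ys
    have hmR := hmargXrpos (Urᵀ *ᵥ x)
    have hmS := hmargYspos ys
    have hmXS := hmargXYspos x ys
    have hmRY := hmargXrYpos (Urᵀ *ᵥ x) y
    rw [hf1, hf2, hf3]
    simp only
    have hB1 : (π x y / margXr (Urᵀ *ᵥ x)) /
          ((margX x / margXr (Urᵀ *ᵥ x)) * (margXrY (Urᵀ *ᵥ x) y / margXr (Urᵀ *ᵥ x)))
        = π x y * margXr (Urᵀ *ᵥ x) / (margX x * margXrY (Urᵀ *ᵥ x) y) := by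
      field_simp
    have hB2 : (π x y / margYs ys) / ((margXYs x ys / margYs ys) * (margY y / margYs ys))
        = π x y * margYs ys / (margXYs x ys * margY y) := by
      field_simp
    have hB3 : (π x y / margXrYs (Urᵀ *ᵥ x) ys) /
          ((margXYs x ys / margXrYs (Urᵀ *ᵥ x) ys) *
            (margXrY (Urᵀ *ᵥ x) y / margXrYs (Urᵀ *ᵥ x) ys))
        = π x y * margXrYs (Urᵀ *ᵥ x) ys / (margXYs x ys * margXrY (Urᵀ *ᵥ x) y) := by
      field_simp
    have hA : (π x y / margY y) /
          (margXrYs (Urᵀ *ᵥ x) ys / margXr (Urᵀ *ᵥ x) * margX x / margYs ys)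
        = (π x y * margXr (Urᵀ *ᵥ x) / (margX x * margXrY (Urᵀ *ᵥ x) y))
          * (π x y * margYs ys / (margXYs x ys * margY y))
          / (π x y * margXrYs (Urᵀ *ᵥ x) ys / (margXYs x ys * margXrY (Urᵀ *ᵥ x) y)) := by
      field_simp
    rw [hA, hB1, hB2, hB3]
    rw [Real.log_div (by positivity) (by positivity),
      Real.log_mul (by positivity) (by positivity)]
    ring
  -- rewrite the LHS integral
  have hsplit : (∫ x : Fin dx → ℝ, (π x y / margY y) *
        Real.log ((π x y / margY y) /
          (margXrYs (Urᵀ *ᵥ x) ys / margXr (Urᵀ *ᵥ x) * margX x / margYs ys)))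
      = (∫ x, f1 x) + (∫ x, f2 x) - ∫ x, f3 x := by
    rw [show (fun x : Fin dx → ℝ => (π x y / margY y) *
        Real.log ((π x y / margY y) /
          (margXrYs (Urᵀ *ᵥ x) ys / margXr (Urᵀ *ᵥ x) * margX x / margYs ys)))
      = fun x => f1 x + f2 x - f3 x from funext hdecomp]
    have hadd : Integrable (fun x => f1 x + f2 x) volume := hint1.add hint2
    rw [integral_sub hadd hint3, integral_add hint1 hint2]
  rw [hsplit]
  have hI3 : 0 ≤ ∫ x, f3 x := by
    -- define P and Q
    set P : (Fin dx → ℝ) → ℝ := fun x => π x y / margY y with hP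
    set Q : (Fin dx → ℝ) → ℝ := fun x =>
      margXYs x ys * margXrY (Urᵀ *ᵥ x) y / (margXrYs (Urᵀ *ᵥ x) ys * margY y) with hQ
    have hPpos : ∀ x, 0 < P x := fun x => div_pos (hπpos x y) hy
    have hQpos : ∀ x, 0 < Q x := fun x => by
      have := hmargXYspos x ys
      have := hmargXrYpos (Urᵀ *ᵥ x) y
      have := hmargXrYspos (Urᵀ *ᵥ x) ys
      positivity
    -- f3 = P log (P/Q)
    have hf3eq : ∀ x, f3 x = P x * Real.log (P x / Q x) := by
      intro x
      rw [hf3, hP, hQ]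
      simp only
      congr 2
      have hπ := hπpos x y
      have hmY := hmargYpos y
      have hmRS := hmargXrYspos (Urᵀ *ᵥ x) ys
      have hmXS := hmargXYspos x ys
      have hmRY := hmargXrYpos (Urᵀ *ᵥ x) y
      field_simp
    -- integrability of π(·, y)
    have hπyint : Integrable (fun x : Fin dx → ℝ => π x y) := by
      apply my_integrable_of_integral_pos
      rw [← hmargY y]; exact hy
    have hPint : Integrable P := hπyint.div_const _
    have hPval : (∫ x, P x) = 1 := by
      rw [hP]
      simp only
      rw [integral_div, ← hmargY y, div_self hy.ne']
    -- integrability of f3 in P/Q form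
    have hfun3 : f3 = fun x => P x * Real.log (P x / Q x) := funext hf3eq
    have h3 : Integrable (fun x => P x * Real.log (P x / Q x)) := hfun3 ▸ hint3
    -- Q is a.e. measurable
    have hPae : AEMeasurable P (volume : Measure (Fin dx → ℝ)) := hPint.aemeasurable
    have h3ae : AEMeasurable (fun x => P x * Real.log (P x / Q x))
        (volume : Measure (Fin dx → ℝ)) := h3.aemeasurable
    have hQalt : Q = fun x => P x / Real.exp ((P x * Real.log (P x / Q x)) / P x) := by
      funext x
      have hPx := hPpos x
      have hQx := hQpos x
      rw [mul_div_cancel_left₀ _ hPx.ne', Real.exp_log (div_pos hPx hQx)]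
      rw [div_div_eq_mul_div, mul_div_cancel_left₀ _ hPx.ne']
    have hQae : AEMeasurable Q (volume : Measure (Fin dx → ℝ)) := by
      rw [hQalt]
      exact hPae.div (Real.measurable_exp.comp_aemeasurable (h3ae.div hPae))
    -- lintegral of Q equals 1
    have hUrT : ∀ (xr : Fin r → ℝ) (xp : Fin rp → ℝ),
        Urᵀ *ᵥ (Ur *ᵥ xr + Up *ᵥ xp) = xr := by
      intro xr xp
      rw [Matrix.mulVec_add, Matrix.mulVec_mulVec, Matrix.mulVec_mulVec, hU1, hU3,
        Matrix.one_mulVec, Matrix.zero_mulVec, add_zero]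
    -- inner marginal integrability facts
    have hinner : ∀ xr : Fin r → ℝ,
        (∫⁻ xp : Fin rp → ℝ, ENNReal.ofReal (Q (Ur *ᵥ xr + Up *ᵥ xp)))
          = ENNReal.ofReal (margXrY xr y / margY y) := by
      intro xr
      have hgval : (∫ xp : Fin rp → ℝ, margXYs (Ur *ᵥ xr + Up *ᵥ xp) ys)
          = margXrYs xr ys := by
        rw [hmargXrYs xr ys]
        refine integral_congr_ae (ae_of_all _ fun xp => ?_)
        exact hmargXYs _ ys
      have hgint : Integrable (fun xp : Fin rp → ℝ => margXYs (Ur *ᵥ xr + Up *ᵥ xp) ys) := by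
        apply my_integrable_of_integral_pos
        rw [hgval]; exact hmargXrYspos xr ys
      have hgl : (∫⁻ xp : Fin rp → ℝ, ENNReal.ofReal (margXYs (Ur *ᵥ xr + Up *ᵥ xp) ys))
          = ENNReal.ofReal (margXrYs xr ys) := by
        rw [← ofReal_integral_eq_lintegral_ofReal hgint
          (ae_of_all _ fun xp => (hmargXYspos _ ys).le), hgval]
      have hQform : ∀ xp : Fin rp → ℝ, Q (Ur *ᵥ xr + Up *ᵥ xp)
          = margXYs (Ur *ᵥ xr + Up *ᵥ xp) ys
            * (margXrY xr y / (margXrYs xr ys * margY y)) := by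
        intro xp
        rw [hQ]
        simp only [hUrT xr xp]
        ring
      calc (∫⁻ xp : Fin rp → ℝ, ENNReal.ofReal (Q (Ur *ᵥ xr + Up *ᵥ xp)))
          = ∫⁻ xp : Fin rp → ℝ, ENNReal.ofReal (margXrY xr y / (margXrYs xr ys * margY y))
              * ENNReal.ofReal (margXYs (Ur *ᵥ xr + Up *ᵥ xp) ys) := by
            apply lintegral_congr
            intro xp
            rw [hQform xp, mul_comm, ENNReal.ofReal_mul
              (div_nonneg (hmargXrYpos xr y).le
                (mul_nonneg (hmargXrYspos xr ys).le hy.le))]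
        _ = ENNReal.ofReal (margXrY xr y / (margXrYs xr ys * margY y))
              * ENNReal.ofReal (margXrYs xr ys) := by
            rw [lintegral_const_mul' _ _ ENNReal.ofReal_ne_top, hgl]
        _ = ENNReal.ofReal (margXrY xr y / margY y) := by
            rw [← ENNReal.ofReal_mul
              (div_nonneg (hmargXrYpos xr y).le
                (mul_nonneg (hmargXrYspos xr ys).le hy.le))]
            congr 1
            have h1 := (hmargXrYspos xr ys).ne'
            have h2 := hy.ne'
            field_simp

    have houter : (∫⁻ xr : Fin r → ℝ, ENNReal.ofReal (margXrY xr y / margY y)) = 1 := by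
      have hA : (∫⁻ x : Fin dx → ℝ, ENNReal.ofReal (π x y)) = ENNReal.ofReal (margY y) := by
        rw [← ofReal_integral_eq_lintegral_ofReal hπyint
          (ae_of_all _ fun x => (hπpos x y).le), ← hmargY y]
      have hB := my_key_cov Ur Up hU1 hU2 hU3 hU4 (fun x => ENNReal.ofReal (π x y))
        (ENNReal.measurable_ofReal.comp_aemeasurable hπyint.aemeasurable)
      have hC : ∀ xr : Fin r → ℝ,
          (∫⁻ xp : Fin rp → ℝ, ENNReal.ofReal (π (Ur *ᵥ xr + Up *ᵥ xp) y))
            = ENNReal.ofReal (margXrY xr y) := by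
        intro xr
        have hint : Integrable (fun xp : Fin rp → ℝ => π (Ur *ᵥ xr + Up *ᵥ xp) y) := by
          apply my_integrable_of_integral_pos
          rw [← hmargXrY xr y]; exact hmargXrYpos xr y
        rw [← ofReal_integral_eq_lintegral_ofReal hint
          (ae_of_all _ fun xp => (hπpos _ y).le), ← hmargXrY xr y]
      have hD : (∫⁻ xr : Fin r → ℝ, ENNReal.ofReal (margXrY xr y))
          = ENNReal.ofReal (margY y) := by
        rw [← hA, hB]
        exact lintegral_congr fun xr => (hC xr).symm
      calc (∫⁻ xr : Fin r → ℝ, ENNReal.ofReal (margXrY xr y / margY y))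
          = ∫⁻ xr : Fin r → ℝ, ENNReal.ofReal (margXrY xr y) * ENNReal.ofReal (margY y)⁻¹ := by
            apply lintegral_congr
            intro xr
            rw [div_eq_mul_inv, ENNReal.ofReal_mul (hmargXrYpos xr y).le]
        _ = ENNReal.ofReal (margY y) * ENNReal.ofReal (margY y)⁻¹ := by
            rw [lintegral_mul_const' _ _ ENNReal.ofReal_ne_top, hD]
        _ = 1 := by
            rw [← ENNReal.ofReal_mul hy.le, mul_inv_cancel₀ hy.ne', ENNReal.ofReal_one]
    have hQl : (∫⁻ x : Fin dx → ℝ, ENNReal.ofReal (Q x)) = 1 := by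
      rw [my_key_cov Ur Up hU1 hU2 hU3 hU4 (fun x => ENNReal.ofReal (Q x))
        (ENNReal.measurable_ofReal.comp_aemeasurable hQae)]
      rw [lintegral_congr fun xr => hinner xr]
      exact houter
    have hQint : Integrable Q := by
      refine ⟨hQae.aestronglyMeasurable, ?_⟩
      rw [HasFiniteIntegral]
      have heq : ∀ x : Fin dx → ℝ, ‖Q x‖ₑ = ENNReal.ofReal (Q x) := fun x =>
        Real.enorm_eq_ofReal (hQpos x).le
      rw [lintegral_congr heq, hQl]
      exact ENNReal.one_lt_top
    have hQval : (∫ x, Q x) = 1 := by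
      rw [integral_eq_lintegral_of_nonneg_ae (ae_of_all _ fun x => (hQpos x).le)
        hQae.aestronglyMeasurable, hQl]
      simp
    -- pointwise Gibbs bound
    have hptw : ∀ x, P x - Q x ≤ P x * Real.log (P x / Q x) := by
      intro x
      have hPx := hPpos x
      have hQx := hQpos x
      have hlog : Real.log (Q x / P x) ≤ Q x / P x - 1 :=
        Real.log_le_sub_one_of_pos (div_pos hQx hPx)
      have hinv : Real.log (Q x / P x) = - Real.log (P x / Q x) := by
        rw [← Real.log_inv, inv_div]
      rw [hinv] at hlog
      have h1 : 1 - Q x / P x ≤ Real.log (P x / Q x) := by linarith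
      have h2 : P x * (1 - Q x / P x) ≤ P x * Real.log (P x / Q x) :=
        mul_le_mul_of_nonneg_left h1 hPx.le
      calc P x - Q x = P x * (1 - Q x / P x) := by field_simp
        _ ≤ P x * Real.log (P x / Q x) := h2
    have hmono : (∫ x, (P x - Q x)) ≤ ∫ x, P x * Real.log (P x / Q x) :=
      integral_mono (hPint.sub hQint) h3 hptw
    rw [integral_sub hPint hQint, hPval, hQval, sub_self] at hmono
    calc (0 : ℝ) ≤ ∫ x, P x * Real.log (P x / Q x) := hmono
      _ = ∫ x, f3 x := integral_congr_ae (ae_of_all _ fun x => (hf3eq x).symm)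
  linarith
end

section
/- Let π(x, y) be a smooth, positive joint probability density on ℝ^{d_x} × ℝ^{d_y} satisfying the subspace logarithmic Sobolev inequality with constant C̄, and let [V_s, V_⊥] ∈ ℝ^{d_y × d_y} be orthogonal with V_s having s columns; write y = V_s y_s + V_⊥ y_⊥, with conditional densities π(x | y) := π(x, y)/π(y), π(x | y_s) and π(y_s | x) defined by marginalizing the transported joint density over y_⊥, all assumed positive and smooth. Then for every probability density p on ℝ^{d_y}, assuming all the relevant integrals are finite and the function x ↦ π(x, y_⊥ | y_s)/π(x | y_s) (for fixed y) is smooth and positive, one has ∬ log( π(y | x) π(y_s) / (π(y_s | x) π(y)) ) π(x | y) p(y) dx dy ≤ (C̄/2) ∬ ‖∇_x log π(y | x) − ∇_x log π(y_s | x)‖² π(x | y) p(y) dx dy. -/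
open MeasureTheory Matrix

noncomputable section

abbrev Evec (n : ℕ) : Type := EuclideanSpace ℝ (Fin n)

/-- Logarithmic Sobolev inequality with constant `C`. -/
def SatisfiesLSI {n : ℕ} (ρ : Evec n → ℝ) (C : ℝ) : Prop :=
  ∀ h : Evec n → ℝ, ContDiff ℝ (⊤ : ℕ∞) h → (∀ z, 0 < h z) →
    (∫ z, h z * ρ z) = 1 →
    (∫ z, h z * Real.log (h z) * ρ z) ≤
      (C / 2) * ∫ z, h z * ‖gradient (fun w => Real.log (h w)) z‖ ^ 2 * ρ z

/-- Subspace logarithmic Sobolev inequality with constant `C`. -/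
def SatisfiesSubspaceLSI {n : ℕ} (ρ : Evec n → ℝ) (C : ℝ) : Prop :=
  ∀ (t u : ℕ) (Wt : Matrix (Fin n) (Fin t) ℝ) (Wp : Matrix (Fin n) (Fin u) ℝ),
    Wtᵀ * Wt = 1 → Wpᵀ * Wp = 1 → Wtᵀ * Wp = 0 → Wt * Wtᵀ + Wp * Wpᵀ = 1 →
    ∀ zp : Evec u,
      (0 < ∫ zt : Evec t, ρ (WithLp.toLp 2 (Wt *ᵥ zt + Wp *ᵥ zp))) →
      SatisfiesLSI
        (fun zt : Evec t =>
          ρ (WithLp.toLp 2 (Wt *ᵥ zt + Wp *ᵥ zp)) / ∫ zt' : Evec t, ρ (WithLp.toLp 2 (Wt *ᵥ zt' + Wp *ᵥ zp))) C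

/-- Concatenation `(x, y) ∈ ℝ^{d_x} × ℝ^{d_y} ↦ ℝ^{d_x + d_y}`. -/
def jointAppend {dx dy : ℕ} (x : Evec dx) (y : Evec dy) : Evec (dx + dy) :=
  WithLp.toLp 2 (Fin.append x y)

/-! ### auxiliary lemmas -/

section Aux

lemma jointAppend_left {m k : ℕ} (x : Evec m) (y : Evec k) (i : Fin m) :
    jointAppend x y (Fin.castAdd k i) = x i := Fin.append_left x y i

lemma jointAppend_right {m k : ℕ} (x : Evec m) (y : Evec k) (i : Fin k) :
    jointAppend x y (Fin.natAdd m i) = y i := Fin.append_right x y i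

/-- the measure-preserving splitting of `ℝ^{m+k}` -/
def esplit (m k : ℕ) : (Evec m × Evec k) ≃ᵐ Evec (m + k) :=
  ((MeasurableEquiv.toLp 2 (Fin m → ℝ)).symm.prodCongr
      (MeasurableEquiv.toLp 2 (Fin k → ℝ)).symm).trans <|
    ((MeasurableEquiv.sumPiEquivProdPi (fun _ : Fin m ⊕ Fin k => ℝ)).symm.trans <|
      (MeasurableEquiv.piCongrLeft (fun _ => ℝ) finSumFinEquiv).trans
        (MeasurableEquiv.toLp 2 (Fin (m + k) → ℝ)).symm.symm)

lemma esplit_mp (m k : ℕ) : MeasurePreserving (esplit m k) volume volume := by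
  have h1 := (EuclideanSpace.volume_preserving_symm_measurableEquiv_toLp (Fin m)).prod
    (EuclideanSpace.volume_preserving_symm_measurableEquiv_toLp (Fin k))
  have h2 := MeasureTheory.volume_measurePreserving_sumPiEquivProdPi_symm
    (fun _ : Fin m ⊕ Fin k => ℝ)
  have h3 := MeasureTheory.volume_measurePreserving_piCongrLeft
    (fun _ : Fin (m+k) => ℝ) finSumFinEquiv
  have h4 := (EuclideanSpace.volume_preserving_symm_measurableEquiv_toLp (Fin (m + k))).symm
  have h : MeasurePreserving (esplit m k) ((volume).prod volume) volume :=
    (((h4.comp h3).comp h2).comp h1)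
  rw [← MeasureTheory.Measure.volume_eq_prod] at h
  exact h

lemma esplit_apply (m k : ℕ) (x : Evec m) (y : Evec k) :
    esplit m k (x, y) = jointAppend x y := by
  ext j
  obtain ⟨i, rfl⟩ := finSumFinEquiv.surjective j
  cases i with
  | inl i =>
      have h : (finSumFinEquiv (Sum.inl i) : Fin (m+k)) = Fin.castAdd k i := rfl
      rw [h, jointAppend_left, ← h]
      exact Equiv.piCongrLeft_sumInl (fun _ => ℝ) finSumFinEquiv _ _ i
  | inr i =>
      have h : (finSumFinEquiv (Sum.inr i) : Fin (m+k)) = Fin.natAdd m i := rfl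
      rw [h, jointAppend_right, ← h]
      exact Equiv.piCongrLeft_sumInr (fun _ => ℝ) finSumFinEquiv _ _ i

lemma esplit_apply' (m k : ℕ) (z : Evec m × Evec k) :
    esplit m k z = jointAppend z.1 z.2 := esplit_apply m k z.1 z.2

/-- transfer of integrals along the splitting -/
lemma esplit_integral (m k : ℕ) (F : Evec (m + k) → ℝ) :
    (∫ z : Evec m × Evec k, F (jointAppend z.1 z.2) ∂((volume : Measure (Evec m)).prod volume))
      = ∫ zt : Evec (m + k), F zt := by
  have hfun : (fun z : Evec m × Evec k => F (jointAppend z.1 z.2))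
      = fun z => F (esplit m k z) := by
    funext z; rw [esplit_apply']
  rw [hfun, ← MeasureTheory.Measure.volume_eq_prod]
  exact (esplit_mp m k).integral_comp' F

/-! block matrices -/

def Wtm (dx : ℕ) {dy u : ℕ} (Vp : Matrix (Fin dy) (Fin u) ℝ) :
    Matrix (Fin (dx + dy)) (Fin (dx + u)) ℝ :=
  (Matrix.fromBlocks (1 : Matrix (Fin dx) (Fin dx) ℝ) 0 0 Vp).submatrix
    finSumFinEquiv.symm finSumFinEquiv.symm

def Wpm (dx : ℕ) {dy s : ℕ} (Vs : Matrix (Fin dy) (Fin s) ℝ) :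
    Matrix (Fin (dx + dy)) (Fin s) ℝ :=
  (Matrix.fromBlocks (0 : Matrix (Fin dx) (Fin 0) ℝ) 0 0 Vs).submatrix
    finSumFinEquiv.symm (Equiv.emptySum (Fin 0) (Fin s)).symm

lemma submatrix_add' {l o m n : Type*} (A B : Matrix m n ℝ) (r : l → m) (c : o → n) :
    A.submatrix r c + B.submatrix r c = (A + B).submatrix r c := by
  ext i j; simp [Matrix.submatrix_apply, Matrix.add_apply]

variable {dx dy s u : ℕ} (Vs : Matrix (Fin dy) (Fin s) ℝ) (Vp : Matrix (Fin dy) (Fin u) ℝ)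

lemma Wtm_orth (hV2 : Vpᵀ * Vp = 1) : (Wtm dx Vp)ᵀ * (Wtm dx Vp) = 1 := by
  rw [Wtm, transpose_submatrix, submatrix_mul_equiv, fromBlocks_transpose, fromBlocks_multiply]
  simp [hV2, fromBlocks_one]

lemma Wpm_orth (hV1 : Vsᵀ * Vs = 1) : (Wpm dx Vs)ᵀ * (Wpm dx Vs) = 1 := by
  rw [Wpm, transpose_submatrix, submatrix_mul_equiv]
  have h : ((fromBlocks (0 : Matrix (Fin dx) (Fin 0) ℝ) 0 0 Vs)ᵀ *
      fromBlocks (0 : Matrix (Fin dx) (Fin 0) ℝ) 0 0 Vs)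
      = (1 : Matrix (Fin 0 ⊕ Fin s) (Fin 0 ⊕ Fin s) ℝ) := by
    rw [fromBlocks_transpose, fromBlocks_multiply]
    ext (i | i) (j | j)
    · exact i.elim0
    · exact i.elim0
    · exact j.elim0
    · simp [hV1, Matrix.one_apply]
  rw [h, Matrix.submatrix_one_equiv]

lemma Wtm_Wpm_orth (hV3 : Vsᵀ * Vp = 0) : (Wtm dx Vp)ᵀ * (Wpm dx Vs) = 0 := by
  rw [Wtm, Wpm, transpose_submatrix, submatrix_mul_equiv, fromBlocks_transpose,
    fromBlocks_multiply]
  have h3 : Vpᵀ * Vs = 0 := by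
    have := congrArg Matrix.transpose hV3
    simpa [Matrix.transpose_mul] using this
  simp [h3]

lemma Wtm_Wpm_complete (hV4 : Vs * Vsᵀ + Vp * Vpᵀ = 1) :
    (Wtm dx Vp) * (Wtm dx Vp)ᵀ + (Wpm dx Vs) * (Wpm dx Vs)ᵀ = 1 := by
  rw [Wtm, Wpm, transpose_submatrix, transpose_submatrix, submatrix_mul_equiv,
    submatrix_mul_equiv, submatrix_add']
  have h : (fromBlocks (1 : Matrix (Fin dx) (Fin dx) ℝ) 0 0 Vp * (fromBlocks (1 : Matrix (Fin dx) (Fin dx) ℝ) 0 0 Vp)ᵀ +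
      fromBlocks (0 : Matrix (Fin dx) (Fin 0) ℝ) 0 0 Vs * (fromBlocks (0 : Matrix (Fin dx) (Fin 0) ℝ) 0 0 Vs)ᵀ)
      = (1 : Matrix (Fin dx ⊕ Fin dy) (Fin dx ⊕ Fin dy) ℝ) := by
    rw [fromBlocks_transpose, fromBlocks_transpose, fromBlocks_multiply, fromBlocks_multiply,
      fromBlocks_add]
    simp only [Matrix.transpose_one, Matrix.transpose_zero, Matrix.mul_one, Matrix.mul_zero,
      Matrix.zero_mul, Matrix.one_mul, add_zero, zero_add]
    rw [add_comm (Vp * Vpᵀ) (Vs * Vsᵀ), hV4]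
    simp [fromBlocks_one]
  rw [h, Matrix.submatrix_one_equiv]

lemma append_comp_finSumFinEquiv {m k : ℕ} (x : Fin m → ℝ) (y : Fin k → ℝ) :
    (Fin.append x y) ∘ finSumFinEquiv = Sum.elim x y := by
  funext i; cases i <;> simp

lemma Wtm_mulVec_append (xx : Evec dx) (yp : Evec u) (ys : Evec s) :
    WithLp.toLp 2 ((Wtm dx Vp) *ᵥ (jointAppend xx yp) + (Wpm dx Vs) *ᵥ ys)
        = jointAppend xx (WithLp.toLp 2 (Vs *ᵥ ys + Vp *ᵥ yp)) := by
  ext i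
  rw [Wtm, Wpm]
  rw [Matrix.submatrix_mulVec_equiv, Matrix.submatrix_mulVec_equiv]
  have h1 : ((jointAppend xx yp : Fin (dx+u) → ℝ) ∘ (finSumFinEquiv.symm).symm)
      = Sum.elim xx yp := append_comp_finSumFinEquiv _ _
  have h2 : ((ys : Fin s → ℝ) ∘ ((Equiv.emptySum (Fin 0) (Fin s)).symm).symm)
      = Sum.elim (fun i : Fin 0 => (0:ℝ)) ys := by
    funext i; cases i with
    | inl i => exact i.elim0
    | inr i => rfl
  rw [h1, h2, Matrix.fromBlocks_mulVec, Matrix.fromBlocks_mulVec]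
  have hadd : ∀ (A B : Evec (dx + dy)) (i : Fin (dx + dy)), (A + B) i = A i + B i :=
    fun A B i => rfl
  rw [WithLp.ofLp_toLp, Pi.add_apply, Function.comp_apply, Function.comp_apply]
  obtain ⟨j, rfl⟩ := finSumFinEquiv.surjective i
  rw [Equiv.symm_apply_apply]
  cases j with
  | inl j => simp [jointAppend, Fin.append_left]
  | inr j => simp [jointAppend, Fin.append_right]; exact add_comm _ _

/-! projection and gradients -/

def projL (m k : ℕ) : Evec (m + k) →L[ℝ] Evec m :=
  LinearMap.toContinuousLinearMap
    { toFun := fun z => (WithLp.toLp 2 (fun i => z (Fin.castAdd k i)) : Evec m)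
      map_add' := fun _ _ => rfl
      map_smul' := fun _ _ => rfl }

lemma projL_apply {m k : ℕ} (z : Evec (m + k)) (i : Fin m) :
    projL m k z i = z (Fin.castAdd k i) := rfl

lemma projL_jointAppend {m k : ℕ} (x : Evec m) (y : Evec k) :
    projL m k (jointAppend x y) = x := by
  ext i; rw [projL_apply]; exact jointAppend_left x y i

lemma toDual_jointAppend {m k : ℕ} (g : Evec m) :
    ((InnerProductSpace.toDual ℝ (Evec m)) g).comp (projL m k)
      = (InnerProductSpace.toDual ℝ (Evec (m+k))) (jointAppend g 0) := by
  apply ContinuousLinearMap.ext; intro w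
  simp only [ContinuousLinearMap.comp_apply, InnerProductSpace.toDual_apply_apply]
  simp only [PiLp.inner_apply, RCLike.inner_apply, starRingEnd_apply, star_trivial]
  rw [Fin.sum_univ_add]
  have h1 : ∀ i : Fin m, jointAppend g (0 : Evec k) (Fin.castAdd k i) = g i :=
    fun i => jointAppend_left _ _ i
  have h2 : ∀ i : Fin k, jointAppend g (0 : Evec k) (Fin.natAdd m i) = 0 :=
    fun i => jointAppend_right _ _ i
  simp [h1, h2, projL_apply]

lemma gradient_comp_projL {m k : ℕ} (f : Evec m → ℝ) (z : Evec (m + k))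
    (hf : DifferentiableAt ℝ f (projL m k z)) :
    gradient (fun w => f (projL m k w)) z = jointAppend (gradient f (projL m k z)) 0 := by
  have hg := hf.hasGradientAt
  have hF : HasFDerivAt f
      ((InnerProductSpace.toDual ℝ (Evec m)) (gradient f (projL m k z))) (projL m k z) :=
    hg.hasFDerivAt
  have hc : HasFDerivAt (fun w => f (projL m k w))
      (((InnerProductSpace.toDual ℝ (Evec m)) (gradient f (projL m k z))).comp (projL m k)) z :=
    hF.comp z (projL m k).hasFDerivAt
  rw [toDual_jointAppend] at hc
  have h := hc.hasGradientAt.gradient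
  simpa using h

lemma norm_jointAppend_zero {m k : ℕ} (g : Evec m) :
    ‖jointAppend g (0 : Evec k)‖ = ‖g‖ := by
  rw [EuclideanSpace.norm_eq (jointAppend g (0 : Evec k)), EuclideanSpace.norm_eq g]
  congr 1
  rw [Fin.sum_univ_add]
  have h1 : ∀ i : Fin m, jointAppend g (0 : Evec k) (Fin.castAdd k i) = g i :=
    fun i => jointAppend_left _ _ i
  have h2 : ∀ i : Fin k, jointAppend g (0 : Evec k) (Fin.natAdd m i) = 0 :=
    fun i => jointAppend_right _ _ i
  simp [h1, h2]

/-! linear inclusions, smoothness of append -/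

lemma jointAppend_add {m k : ℕ} (a b : Evec m) (c d : Evec k) :
    jointAppend (a + b) (c + d) = jointAppend a c + jointAppend b d := by
  ext i
  have hadd : ∀ (A B : Evec (m + k)) (i : Fin (m + k)), (A + B) i = A i + B i :=
    fun A B i => rfl
  rw [hadd]
  induction i using Fin.addCases with
  | left i =>
      rw [jointAppend_left, jointAppend_left, jointAppend_left]; rfl
  | right i =>
      rw [jointAppend_right, jointAppend_right, jointAppend_right]; rfl

lemma jointAppend_smul {m k : ℕ} (r : ℝ) (a : Evec m) (c : Evec k) :
    jointAppend (r • a) (r • c) = r • jointAppend a c := by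
  ext i
  have hsmul : ∀ (A : Evec (m + k)) (i : Fin (m + k)), (r • A) i = r * A i :=
    fun A i => rfl
  rw [hsmul]
  induction i using Fin.addCases with
  | left i => rw [jointAppend_left, jointAppend_left]; rfl
  | right i => rw [jointAppend_right, jointAppend_right]; rfl

def inclL1 (m k : ℕ) : Evec m →L[ℝ] Evec (m + k) :=
  LinearMap.toContinuousLinearMap
    { toFun := fun v => jointAppend v 0
      map_add' := fun a b => by
        have := jointAppend_add (m := m) (k := k) a b 0 0
        simpa using this
      map_smul' := fun r a => by
        have := jointAppend_smul (m := m) (k := k) r a 0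
        simpa using this }

def inclL2 (m k : ℕ) : Evec k →L[ℝ] Evec (m + k) :=
  LinearMap.toContinuousLinearMap
    { toFun := fun v => jointAppend 0 v
      map_add' := fun a b => by
        have := jointAppend_add (m := m) (k := k) 0 0 a b
        simpa using this
      map_smul' := fun r a => by
        have := jointAppend_smul (m := m) (k := k) r 0 a
        simpa using this }

lemma jointAppend_eq_incl {m k : ℕ} (a : Evec m) (b : Evec k) :
    jointAppend a b = inclL1 m k a + inclL2 m k b := by
  have := jointAppend_add (m := m) (k := k) a 0 0 b
  simp only [add_zero, zero_add] at this; exact this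

lemma contDiff_jointAppend_left {m k : ℕ} (y : Evec k) :
    ContDiff ℝ (⊤ : ℕ∞) (fun x : Evec m => jointAppend x y) := by
  have h : (fun x : Evec m => jointAppend x y)
      = fun x => inclL1 m k x + inclL2 m k y := by
    funext x; exact jointAppend_eq_incl x y
  rw [h]
  exact (inclL1 m k).contDiff.add contDiff_const

lemma continuous_jointAppend2 {m k : ℕ} :
    Continuous (fun z : Evec m × Evec k => jointAppend z.1 z.2) := by
  have h : (fun z : Evec m × Evec k => jointAppend z.1 z.2)
      = fun z => inclL1 m k z.1 + inclL2 m k z.2 := by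
    funext z; exact jointAppend_eq_incl z.1 z.2
  rw [h]
  exact ((inclL1 m k).continuous.comp continuous_fst).add
    ((inclL2 m k).continuous.comp continuous_snd)

def mulVecL {m n : ℕ} (M : Matrix (Fin m) (Fin n) ℝ) : Evec n →L[ℝ] Evec m :=
  LinearMap.toContinuousLinearMap
    { toFun := fun v => (WithLp.toLp 2 (M *ᵥ v) : Evec m)
      map_add' := fun a b => by ext i; simp [Matrix.mulVec_add]
      map_smul' := fun r a => by ext i; simp [Matrix.mulVec_smul] }

/-! misc analysis facts -/

lemma integrable_of_integral_pos {α : Type*} [MeasureSpace α] {f : α → ℝ} {c : ℝ}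
    (h : c = ∫ a, f a) (hc : 0 < c) : Integrable f volume := by
  by_contra hn
  rw [integral_undef hn] at h
  exact absurd (h ▸ hc) (lt_irrefl 0)

lemma neg_one_le_mul_log {t : ℝ} (ht : 0 < t) : -1 ≤ t * Real.log t := by
  have h := Real.log_le_sub_one_of_pos (show (0:ℝ) < t⁻¹ by positivity)
  rw [Real.log_inv] at h
  have h3 := mul_le_mul_of_nonneg_left h ht.le
  have h2 : t * t⁻¹ = 1 := mul_inv_cancel₀ ht.ne'
  nlinarith

lemma gradient_continuous {n : ℕ} {f : Evec n → ℝ} (hf : ContDiff ℝ (⊤ : ℕ∞) f) :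
    Continuous (fun x => gradient f x) := by
  have h1 : Continuous (fderiv ℝ f) := hf.continuous_fderiv (by simp)
  exact ((InnerProductSpace.toDual ℝ (Evec n)).symm.continuous).comp h1

lemma gradient_sub' {n : ℕ} {f g : Evec n → ℝ} {x : Evec n}
    (hf : DifferentiableAt ℝ f x) (hg : DifferentiableAt ℝ g x) :
    gradient (fun z => f z - g z) x = gradient f x - gradient g x := by
  have h1 := hf.hasGradientAt.hasFDerivAt
  have h2 := hg.hasGradientAt.hasFDerivAt
  have h3 := h1.sub h2
  rw [← map_sub] at h3
  have := h3.hasGradientAt.gradient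
  exact this.trans (LinearIsometryEquiv.symm_apply_apply _ _)

lemma gradient_add_const {n : ℕ} {f : Evec n → ℝ} {x : Evec n} {C : ℝ}
    (hf : DifferentiableAt ℝ f x) :
    gradient (fun z => f z + C) x = gradient f x := by
  have h1 := hf.hasGradientAt.hasFDerivAt
  have h2 := h1.add_const C
  have h3 := h2.hasGradientAt.gradient
  simpa [gradient] using h3

end Aux

theorem stmt6_key {dx dy s u : ℕ} (Cb : ℝ)
    (ρ : Evec (dx + dy) → ℝ)
    (hρsmooth : ContDiff ℝ (⊤ : ℕ∞) ρ) (hρpos : ∀ z, 0 < ρ z)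
    (hLSI : SatisfiesSubspaceLSI ρ Cb)
    (Vs : Matrix (Fin dy) (Fin s) ℝ) (Vp : Matrix (Fin dy) (Fin u) ℝ)
    (hV1 : Vsᵀ * Vs = 1) (hV2 : Vpᵀ * Vp = 1) (hV3 : Vsᵀ * Vp = 0)
    (hV4 : Vs * Vsᵀ + Vp * Vpᵀ = 1)
    (margX : Evec dx → ℝ) (margY : Evec dy → ℝ)
    (margXYs : Evec dx → Evec s → ℝ) (margYs : Evec s → ℝ)
    (y : Evec dy) (ys : Evec s)
    (hmargY : margY y = ∫ x : Evec dx, ρ (jointAppend x y))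
    (hmargXYs : ∀ x, margXYs x ys = ∫ yp : Evec u, ρ (jointAppend x (WithLp.toLp 2 (Vs *ᵥ ys + Vp *ᵥ yp))))
    (hmargYs : margYs ys = ∫ x : Evec dx, margXYs x ys)
    (hmargXpos : ∀ x, 0 < margX x) (hmargYpos : 0 < margY y)
    (hmargXYspos : ∀ x, 0 < margXYs x ys) (hmargYspos : 0 < margYs ys)
    (hmargXsmooth : ContDiff ℝ (⊤ : ℕ∞) margX)
    (hmargXYssmooth : ContDiff ℝ (⊤ : ℕ∞) (fun x => margXYs x ys))
    (hratio1 : ContDiff ℝ (⊤ : ℕ∞) (fun x : Evec dx => ρ (jointAppend x y) / margXYs x ys))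
    (hratio2 : ∀ x : Evec dx, 0 < ρ (jointAppend x y) / margXYs x ys)
    (hint1 : Integrable (fun x : Evec dx =>
      Real.log ((ρ (jointAppend x y) / margX x) * margYs ys /
          ((margXYs x ys / margX x) * margY y)) * (ρ (jointAppend x y) / margY y)))
    (hint3 : Integrable (fun x : Evec dx =>
      ‖gradient (fun x' => Real.log (ρ (jointAppend x' y) / margX x')) x -
          gradient (fun x' => Real.log (margXYs x' ys / margX x')) x‖ ^ 2 *
        (ρ (jointAppend x y) / margY y))) :
    (∫ x : Evec dx,
      Real.log ((ρ (jointAppend x y) / margX x) * margYs ys /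
          ((margXYs x ys / margX x) * margY y)) * (ρ (jointAppend x y) / margY y))
      ≤ (Cb / 2) * ∫ x : Evec dx,
          ‖gradient (fun x' => Real.log (ρ (jointAppend x' y) / margX x')) x -
              gradient (fun x' => Real.log (margXYs x' ys / margX x')) x‖ ^ 2 *
            (ρ (jointAppend x y) / margY y) := by
  classical
  have hY0 : margY y ≠ 0 := hmargYpos.ne'
  have hYs0 : margYs ys ≠ 0 := hmargYspos.ne'
  set cc : ℝ := margYs ys / margY y with hcc
  have hccpos : 0 < cc := div_pos hmargYspos hmargYpos
  set hf : Evec dx → ℝ := fun x => (ρ (jointAppend x y) / margXYs x ys) * cc with hhf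
  have hfpos : ∀ x, 0 < hf x := fun x => mul_pos (hratio2 x) hccpos
  have hfsmooth : ContDiff ℝ (⊤ : ℕ∞) hf := hratio1.mul contDiff_const
  have hfmeas : Measurable hf := hfsmooth.continuous.measurable
  have hhm : ∀ x, hf x * margXYs x ys * margY y = margYs ys * ρ (jointAppend x y) := by
    intro x
    have hx0 : margXYs x ys ≠ 0 := (hmargXYspos x).ne'
    rw [hhf, hcc]
    field_simp
  have hfm : ∀ x, hf x * margXYs x ys = margYs ys * ρ (jointAppend x y) / margY y := by
    intro x
    rw [eq_div_iff hY0]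
    exact hhm x
  have hρa_int : Integrable (fun x : Evec dx => ρ (jointAppend x y)) :=
    integrable_of_integral_pos hmargY hmargYpos
  have hsect_int : ∀ x, Integrable (fun yp : Evec u => ρ (jointAppend x (WithLp.toLp 2 (Vs *ᵥ ys + Vp *ᵥ yp)))) :=
    fun x => integrable_of_integral_pos (hmargXYs x) (hmargXYspos x)
  have hmXYs_int : Integrable (fun x => margXYs x ys) :=
    integrable_of_integral_pos hmargYs hmargYspos
  have hrcont : Continuous
      (fun z : Evec dx × Evec u => ρ (jointAppend z.1 (WithLp.toLp 2 (Vs *ᵥ ys + Vp *ᵥ z.2)))) := by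
    apply hρsmooth.continuous.comp
    exact continuous_jointAppend2.comp (continuous_fst.prodMk
      ((continuous_const (y := (WithLp.toLp 2 (Vs *ᵥ ys) : Evec dy))).add ((mulVecL Vp).continuous.comp continuous_snd)))
  have hWA : ∀ (a : Evec dx) (b : Evec u),
      ρ (WithLp.toLp 2 ((Wtm dx Vp) *ᵥ (jointAppend a b) + (Wpm dx Vs) *ᵥ ys))
        = ρ (jointAppend a (WithLp.toLp 2 (Vs *ᵥ ys + Vp *ᵥ b))) :=
    fun a b => congrArg ρ (Wtm_mulVec_append Vs Vp a b ys)
  -- Lemma A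
  have prodA : ∀ φ : Evec dx → ℝ, Measurable φ → (∀ x, 0 ≤ φ x) →
      Integrable (fun x => φ x * margXYs x ys) →
      (Integrable (fun z : Evec dx × Evec u =>
          φ z.1 * ρ (jointAppend z.1 (WithLp.toLp 2 (Vs *ᵥ ys + Vp *ᵥ z.2))))
          ((volume : Measure (Evec dx)).prod volume)
        ∧ (∫ z : Evec dx × Evec u, φ z.1 * ρ (jointAppend z.1 (WithLp.toLp 2 (Vs *ᵥ ys + Vp *ᵥ z.2)))
              ∂((volume : Measure (Evec dx)).prod volume))
            = ∫ x, φ x * margXYs x ys) := by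
    intro φ hφm hφ0 hφint
    have hmeas : AEStronglyMeasurable
        (fun z : Evec dx × Evec u => φ z.1 * ρ (jointAppend z.1 (WithLp.toLp 2 (Vs *ᵥ ys + Vp *ᵥ z.2))))
        ((volume : Measure (Evec dx)).prod volume) :=
      ((hφm.comp measurable_fst).mul hrcont.measurable).aestronglyMeasurable
    have hsect : ∀ x, Integrable
        (fun yp : Evec u => φ x * ρ (jointAppend x (WithLp.toLp 2 (Vs *ᵥ ys + Vp *ᵥ yp)))) :=
      fun x => (hsect_int x).const_mul (φ x)
    have hinner : ∀ x, (∫ yp : Evec u, φ x * ρ (jointAppend x (WithLp.toLp 2 (Vs *ᵥ ys + Vp *ᵥ yp))))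
        = φ x * margXYs x ys := by
      intro x
      rw [MeasureTheory.integral_const_mul, ← hmargXYs x]
    have hIint : Integrable (fun x =>
        ∫ yp : Evec u, ‖φ x * ρ (jointAppend x (WithLp.toLp 2 (Vs *ᵥ ys + Vp *ᵥ yp)))‖) := by
      have he : (fun x => ∫ yp : Evec u, ‖φ x * ρ (jointAppend x (WithLp.toLp 2 (Vs *ᵥ ys + Vp *ᵥ yp)))‖)
          = fun x => φ x * margXYs x ys := by
        funext x
        rw [show (fun yp : Evec u => ‖φ x * ρ (jointAppend x (WithLp.toLp 2 (Vs *ᵥ ys + Vp *ᵥ yp)))‖)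
            = fun yp : Evec u => φ x * ρ (jointAppend x (WithLp.toLp 2 (Vs *ᵥ ys + Vp *ᵥ yp))) from
          funext fun yp => Real.norm_of_nonneg (mul_nonneg (hφ0 x) (hρpos _).le)]
        exact hinner x
      rw [he]; exact hφint
    have hInt := (integrable_prod_iff hmeas).2 ⟨Filter.Eventually.of_forall hsect, hIint⟩
    refine ⟨hInt, ?_⟩
    rw [MeasureTheory.integral_prod _ hInt]
    exact integral_congr_ae (Filter.Eventually.of_forall fun x => hinner x)
  -- normalisation of the conditional density
  have hZ : (∫ zt : Evec (dx + u), ρ (WithLp.toLp 2 ((Wtm dx Vp) *ᵥ zt + (Wpm dx Vs) *ᵥ ys))) = margYs ys := by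
    rw [← esplit_integral dx u fun zt => ρ (WithLp.toLp 2 ((Wtm dx Vp) *ᵥ zt + (Wpm dx Vs) *ᵥ ys))]
    have h1 : (∫ z : Evec dx × Evec u,
        ρ (WithLp.toLp 2 ((Wtm dx Vp) *ᵥ jointAppend z.1 z.2 + (Wpm dx Vs) *ᵥ ys))
          ∂((volume : Measure (Evec dx)).prod volume))
        = ∫ z : Evec dx × Evec u, (1:ℝ) * ρ (jointAppend z.1 (WithLp.toLp 2 (Vs *ᵥ ys + Vp *ᵥ z.2)))
            ∂((volume : Measure (Evec dx)).prod volume) :=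
      integral_congr_ae (Filter.Eventually.of_forall fun z => by
        beta_reduce
        rw [hWA z.1 z.2, one_mul])
    rw [h1, (prodA (fun _ => (1:ℝ)) measurable_const (fun _ => zero_le_one)
      (by simpa using hmXYs_int)).2]
    simp only [one_mul]
    exact hmargYs.symm
  have hZpos : (0:ℝ) < ∫ zt : Evec (dx + u), ρ (WithLp.toLp 2 ((Wtm dx Vp) *ᵥ zt + (Wpm dx Vs) *ᵥ ys)) := by
    rw [hZ]; exact hmargYspos
  have lsi := hLSI (dx + u) s (Wtm dx Vp) (Wpm dx Vs) (Wtm_orth Vp hV2) (Wpm_orth Vs hV1)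
    (Wtm_Wpm_orth Vs Vp hV3) (Wtm_Wpm_complete Vs Vp hV4) ys hZpos
  have hsm : ContDiff ℝ (⊤ : ℕ∞) (fun zt : Evec (dx + u) => hf (projL dx u zt)) :=
    hfsmooth.comp (projL dx u).contDiff
  -- the normalisation hypothesis
  have hid0 : ∀ x, (hf x / margYs ys) * margXYs x ys = ρ (jointAppend x y) / margY y := by
    intro x
    rw [div_mul_eq_mul_div, hfm x, mul_div_assoc, mul_div_cancel_left₀ _ hYs0]
  have hφ0int : Integrable (fun x => (hf x / margYs ys) * margXYs x ys) :=
    (hρa_int.div_const (margY y)).congr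
      (Filter.Eventually.of_forall fun x => (hid0 x).symm)
  have hnorm : (∫ zt : Evec (dx + u), hf (projL dx u zt) *
      (ρ (WithLp.toLp 2 ((Wtm dx Vp) *ᵥ zt + (Wpm dx Vs) *ᵥ ys))
        / ∫ zt' : Evec (dx + u), ρ (WithLp.toLp 2 ((Wtm dx Vp) *ᵥ zt' + (Wpm dx Vs) *ᵥ ys)))) = 1 := by
    simp only [hZ]
    rw [← esplit_integral dx u fun zt => hf (projL dx u zt) *
      (ρ (WithLp.toLp 2 ((Wtm dx Vp) *ᵥ zt + (Wpm dx Vs) *ᵥ ys)) / margYs ys)]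
    have h1 : (∫ z : Evec dx × Evec u, hf (projL dx u (jointAppend z.1 z.2)) *
        (ρ (WithLp.toLp 2 ((Wtm dx Vp) *ᵥ jointAppend z.1 z.2 + (Wpm dx Vs) *ᵥ ys)) / margYs ys)
          ∂((volume : Measure (Evec dx)).prod volume))
        = ∫ z : Evec dx × Evec u, (hf z.1 / margYs ys) *
            ρ (jointAppend z.1 (WithLp.toLp 2 (Vs *ᵥ ys + Vp *ᵥ z.2)))
            ∂((volume : Measure (Evec dx)).prod volume) :=
      integral_congr_ae (Filter.Eventually.of_forall fun z => by
        beta_reduce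
        rw [projL_jointAppend, hWA z.1 z.2]; ring)
    rw [h1, (prodA (fun x => hf x / margYs ys) (hfmeas.div_const _)
      (fun x => div_nonneg (hfpos x).le hmargYspos.le) hφ0int).2]
    have h2 : (∫ x : Evec dx, (hf x / margYs ys) * margXYs x ys)
        = ∫ x : Evec dx, ρ (jointAppend x y) / margY y :=
      integral_congr_ae (Filter.Eventually.of_forall fun x => hid0 x)
    rw [h2, integral_div, ← hmargY, div_self hY0]
  have lsih := lsi (fun zt => hf (projL dx u zt)) hsm (fun zt => hfpos _) hnorm
  simp only [hZ] at lsih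
  -- identification of the integrand of the entropy
  have hstuff : ∀ x, (ρ (jointAppend x y) / margX x) * margYs ys /
      ((margXYs x ys / margX x) * margY y) = hf x := by
    intro x
    have hX0 : margX x ≠ 0 := (hmargXpos x).ne'
    have hXYs0 : margXYs x ys ≠ 0 := (hmargXYspos x).ne'
    rw [hhf, hcc]
    field_simp
  have hL_int : Integrable (fun x : Evec dx =>
      Real.log (hf x) * (ρ (jointAppend x y) / margY y)) :=
    hint1.congr (Filter.Eventually.of_forall fun x => by beta_reduce; rw [hstuff x])
  have heq1 : ∀ x, Real.log (hf x) * (ρ (jointAppend x y) / margY y)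
      + margXYs x ys / margYs ys
      = ((hf x * Real.log (hf x) + 1) / margYs ys) * margXYs x ys := by
    intro x
    have h1 : ((hf x * Real.log (hf x) + 1) / margYs ys) * margXYs x ys
        = (Real.log (hf x) * (hf x * margXYs x ys) + margXYs x ys) / margYs ys := by ring
    rw [h1, hfm x]
    field_simp
  have hφ1int : Integrable (fun x =>
      ((hf x * Real.log (hf x) + 1) / margYs ys) * margXYs x ys) :=
    (hL_int.add (hmXYs_int.div_const _)).congr
      (Filter.Eventually.of_forall fun x => heq1 x)
  have hφ2int : Integrable (fun x => (1 / margYs ys) * margXYs x ys) :=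
    hmXYs_int.const_mul _
  have hφ1meas : Measurable (fun x => (hf x * Real.log (hf x) + 1) / margYs ys) :=
    ((hfmeas.mul (Real.measurable_log.comp hfmeas)).add measurable_const).div_const _
  have hφ1nonneg : ∀ x, 0 ≤ (hf x * Real.log (hf x) + 1) / margYs ys := by
    intro x
    apply div_nonneg _ hmargYspos.le
    nlinarith [neg_one_le_mul_log (hfpos x)]
  have hP1 := prodA (fun x => (hf x * Real.log (hf x) + 1) / margYs ys)
    hφ1meas hφ1nonneg hφ1int
  have hP2 := prodA (fun _ => 1 / margYs ys) measurable_const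
    (fun _ => div_nonneg zero_le_one hmargYspos.le) hφ2int
  have EntEq : (∫ zt : Evec (dx + u), hf (projL dx u zt) * Real.log (hf (projL dx u zt)) *
      (ρ (WithLp.toLp 2 ((Wtm dx Vp) *ᵥ zt + (Wpm dx Vs) *ᵥ ys)) / margYs ys))
      = ∫ x : Evec dx,
        Real.log ((ρ (jointAppend x y) / margX x) * margYs ys /
            ((margXYs x ys / margX x) * margY y)) * (ρ (jointAppend x y) / margY y) := by
    rw [← esplit_integral dx u fun zt => hf (projL dx u zt) * Real.log (hf (projL dx u zt)) *
      (ρ (WithLp.toLp 2 ((Wtm dx Vp) *ᵥ zt + (Wpm dx Vs) *ᵥ ys)) / margYs ys)]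
    have h1 : (∫ z : Evec dx × Evec u, hf (projL dx u (jointAppend z.1 z.2)) *
        Real.log (hf (projL dx u (jointAppend z.1 z.2))) *
        (ρ (WithLp.toLp 2 ((Wtm dx Vp) *ᵥ jointAppend z.1 z.2 + (Wpm dx Vs) *ᵥ ys)) / margYs ys)
          ∂((volume : Measure (Evec dx)).prod volume))
        = ∫ z : Evec dx × Evec u,
            (((hf z.1 * Real.log (hf z.1) + 1) / margYs ys) *
              ρ (jointAppend z.1 (WithLp.toLp 2 (Vs *ᵥ ys + Vp *ᵥ z.2)))
            - (1 / margYs ys) * ρ (jointAppend z.1 (WithLp.toLp 2 (Vs *ᵥ ys + Vp *ᵥ z.2))))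
            ∂((volume : Measure (Evec dx)).prod volume) :=
      integral_congr_ae (Filter.Eventually.of_forall fun z => by
        beta_reduce
        rw [projL_jointAppend, hWA z.1 z.2]; ring)
    rw [h1, integral_sub hP1.1 hP2.1, hP1.2, hP2.2, ← integral_sub hφ1int hφ2int]
    refine integral_congr_ae (Filter.Eventually.of_forall fun x => ?_)
    beta_reduce
    rw [hstuff x, ← heq1 x]
    ring
  -- gradients
  have hρa_smooth : ContDiff ℝ (⊤ : ℕ∞) (fun x : Evec dx => ρ (jointAppend x y)) :=
    hρsmooth.comp (contDiff_jointAppend_left y)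
  have hlogh_diff : ∀ x, DifferentiableAt ℝ (fun x' => Real.log (hf x')) x := fun x =>
    (Real.differentiableAt_log (hfpos x).ne').comp x (hfsmooth.differentiable (by simp) x)
  have hda : ∀ x, DifferentiableAt ℝ (fun x' => Real.log (ρ (jointAppend x' y))) x := fun x =>
    (Real.differentiableAt_log (hρpos _).ne').comp (g := Real.log) x (hρa_smooth.differentiable (by simp) x)
  have hdb : ∀ x, DifferentiableAt ℝ (fun x' => Real.log (margX x')) x := fun x =>
    (Real.differentiableAt_log (hmargXpos x).ne').comp x (hmargXsmooth.differentiable (by simp) x)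
  have hdd : ∀ x, DifferentiableAt ℝ (fun x' => Real.log (margXYs x' ys)) x := fun x =>
    (Real.differentiableAt_log (hmargXYspos x).ne').comp (g := Real.log) x
      (hmargXYssmooth.differentiable (by simp) x)
  have e1 : (fun x' : Evec dx => Real.log (ρ (jointAppend x' y) / margX x'))
      = fun x' => Real.log (ρ (jointAppend x' y)) - Real.log (margX x') :=
    funext fun x' => Real.log_div (hρpos _).ne' (hmargXpos x').ne'
  have e2 : (fun x' : Evec dx => Real.log (margXYs x' ys / margX x'))
      = fun x' => Real.log (margXYs x' ys) - Real.log (margX x') :=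
    funext fun x' => Real.log_div (hmargXYspos x').ne' (hmargXpos x').ne'
  have e3 : (fun x' : Evec dx => Real.log (hf x'))
      = fun x' => (Real.log (ρ (jointAppend x' y)) - Real.log (margXYs x' ys)) + Real.log cc := by
    funext x'
    rw [hhf]
    rw [Real.log_mul (ne_of_gt (hratio2 x')) hccpos.ne',
      Real.log_div (hρpos _).ne' (hmargXYspos x').ne']
  have hgrad : ∀ x, gradient (fun x' => Real.log (hf x')) x
      = gradient (fun x' => Real.log (ρ (jointAppend x' y) / margX x')) x
        - gradient (fun x' => Real.log (margXYs x' ys / margX x')) x := by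
    intro x
    have Ha := (hda x).hasGradientAt.hasFDerivAt
    have Hb := (hdb x).hasGradientAt.hasFDerivAt
    have Hd := (hdd x).hasGradientAt.hasFDerivAt
    have H1 : HasGradientAt (fun x' => Real.log (ρ (jointAppend x' y) / margX x'))
        (gradient (fun x' => Real.log (ρ (jointAppend x' y))) x
          - gradient (fun x' => Real.log (margX x')) x) x := by
      rw [e1]
      apply hasGradientAt_iff_hasFDerivAt.mpr
      rw [map_sub]
      exact Ha.sub Hb
    have H2 : HasGradientAt (fun x' => Real.log (margXYs x' ys / margX x'))
        (gradient (fun x' => Real.log (margXYs x' ys)) x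
          - gradient (fun x' => Real.log (margX x')) x) x := by
      rw [e2]
      apply hasGradientAt_iff_hasFDerivAt.mpr
      rw [map_sub]
      exact Hd.sub Hb
    have H3 : HasGradientAt (fun x' => Real.log (hf x'))
        (gradient (fun x' => Real.log (ρ (jointAppend x' y))) x
          - gradient (fun x' => Real.log (margXYs x' ys)) x) x := by
      rw [e3]
      apply hasGradientAt_iff_hasFDerivAt.mpr
      rw [map_sub]
      exact (Ha.sub Hd).add_const (Real.log cc)
    rw [H3.gradient, H1.gradient, H2.gradient]
    abel
  -- continuity of the gradient difference
  have l1smooth : ContDiff ℝ (⊤ : ℕ∞)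
      (fun x : Evec dx => Real.log (ρ (jointAppend x y) / margX x)) :=
    (hρa_smooth.div hmargXsmooth fun x => (hmargXpos x).ne').log
      fun x => (div_pos (hρpos _) (hmargXpos x)).ne'
  have l2smooth : ContDiff ℝ (⊤ : ℕ∞)
      (fun x : Evec dx => Real.log (margXYs x ys / margX x)) :=
    (hmargXYssmooth.div hmargXsmooth fun x => (hmargXpos x).ne').log
      fun x => (div_pos (hmargXYspos x) (hmargXpos x)).ne'
  have hGcont : Continuous (fun x : Evec dx =>
      gradient (fun x' => Real.log (ρ (jointAppend x' y) / margX x')) x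
        - gradient (fun x' => Real.log (margXYs x' ys / margX x')) x) :=
    (gradient_continuous l1smooth).sub (gradient_continuous l2smooth)
  have hφ3meas : Measurable (fun x : Evec dx =>
      hf x * ‖gradient (fun x' => Real.log (ρ (jointAppend x' y) / margX x')) x
        - gradient (fun x' => Real.log (margXYs x' ys / margX x')) x‖ ^ 2 / margYs ys) :=
    ((hfmeas.mul ((hGcont.norm.measurable).pow_const 2)).div_const _)
  have heq3 : ∀ x : Evec dx,
      ‖gradient (fun x' => Real.log (ρ (jointAppend x' y) / margX x')) x
        - gradient (fun x' => Real.log (margXYs x' ys / margX x')) x‖ ^ 2 *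
        (ρ (jointAppend x y) / margY y)
      = (hf x * ‖gradient (fun x' => Real.log (ρ (jointAppend x' y) / margX x')) x
        - gradient (fun x' => Real.log (margXYs x' ys / margX x')) x‖ ^ 2 / margYs ys)
          * margXYs x ys := by
    intro x
    have h1 : (hf x * ‖gradient (fun x' => Real.log (ρ (jointAppend x' y) / margX x')) x
        - gradient (fun x' => Real.log (margXYs x' ys / margX x')) x‖ ^ 2 / margYs ys)
          * margXYs x ys
        = ‖gradient (fun x' => Real.log (ρ (jointAppend x' y) / margX x')) x
            - gradient (fun x' => Real.log (margXYs x' ys / margX x')) x‖ ^ 2 *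
          (hf x * margXYs x ys) / margYs ys := by ring
    rw [h1, hfm x]
    field_simp
  have hφ3int : Integrable (fun x : Evec dx =>
      (hf x * ‖gradient (fun x' => Real.log (ρ (jointAppend x' y) / margX x')) x
        - gradient (fun x' => Real.log (margXYs x' ys / margX x')) x‖ ^ 2 / margYs ys)
          * margXYs x ys) :=
    hint3.congr (Filter.Eventually.of_forall fun x => heq3 x)
  have hφ3nonneg : ∀ x : Evec dx, 0 ≤
      hf x * ‖gradient (fun x' => Real.log (ρ (jointAppend x' y) / margX x')) x
        - gradient (fun x' => Real.log (margXYs x' ys / margX x')) x‖ ^ 2 / margYs ys :=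
    fun x => div_nonneg (mul_nonneg (hfpos x).le (by positivity)) hmargYspos.le
  have hP3 := prodA _ hφ3meas hφ3nonneg hφ3int
  have hgc : ∀ zt : Evec (dx + u),
      gradient (fun w => Real.log (hf (projL dx u w))) zt
        = jointAppend (gradient (fun x' => Real.log (hf x')) (projL dx u zt)) 0 :=
    fun zt => gradient_comp_projL (fun x' => Real.log (hf x')) zt (hlogh_diff _)
  have EnEq : (∫ zt : Evec (dx + u), hf (projL dx u zt) *
      ‖gradient (fun w => Real.log (hf (projL dx u w))) zt‖ ^ 2 *
      (ρ (WithLp.toLp 2 ((Wtm dx Vp) *ᵥ zt + (Wpm dx Vs) *ᵥ ys)) / margYs ys))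
      = ∫ x : Evec dx,
          ‖gradient (fun x' => Real.log (ρ (jointAppend x' y) / margX x')) x -
              gradient (fun x' => Real.log (margXYs x' ys / margX x')) x‖ ^ 2 *
            (ρ (jointAppend x y) / margY y) := by
    rw [← esplit_integral dx u fun zt => hf (projL dx u zt) *
      ‖gradient (fun w => Real.log (hf (projL dx u w))) zt‖ ^ 2 *
      (ρ (WithLp.toLp 2 ((Wtm dx Vp) *ᵥ zt + (Wpm dx Vs) *ᵥ ys)) / margYs ys)]
    have h1 : (∫ z : Evec dx × Evec u, hf (projL dx u (jointAppend z.1 z.2)) *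
        ‖gradient (fun w => Real.log (hf (projL dx u w))) (jointAppend z.1 z.2)‖ ^ 2 *
        (ρ (WithLp.toLp 2 ((Wtm dx Vp) *ᵥ jointAppend z.1 z.2 + (Wpm dx Vs) *ᵥ ys)) / margYs ys)
          ∂((volume : Measure (Evec dx)).prod volume))
        = ∫ z : Evec dx × Evec u,
            (hf z.1 * ‖gradient (fun x' => Real.log (ρ (jointAppend x' y) / margX x')) z.1
              - gradient (fun x' => Real.log (margXYs x' ys / margX x')) z.1‖ ^ 2 / margYs ys)
              * ρ (jointAppend z.1 (WithLp.toLp 2 (Vs *ᵥ ys + Vp *ᵥ z.2)))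
            ∂((volume : Measure (Evec dx)).prod volume) :=
      integral_congr_ae (Filter.Eventually.of_forall fun z => by
        beta_reduce
        rw [hgc, norm_jointAppend_zero, projL_jointAppend, hWA z.1 z.2, hgrad]
        ring)
    rw [h1, hP3.2]
    exact integral_congr_ae (Filter.Eventually.of_forall fun x => (heq3 x).symm)
  calc (∫ x : Evec dx,
      Real.log ((ρ (jointAppend x y) / margX x) * margYs ys /
          ((margXYs x ys / margX x) * margY y)) * (ρ (jointAppend x y) / margY y))
      = ∫ zt : Evec (dx + u), hf (projL dx u zt) * Real.log (hf (projL dx u zt)) *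
          (ρ (WithLp.toLp 2 ((Wtm dx Vp) *ᵥ zt + (Wpm dx Vs) *ᵥ ys)) / margYs ys) := EntEq.symm
    _ ≤ (Cb / 2) * ∫ zt : Evec (dx + u), hf (projL dx u zt) *
          ‖gradient (fun w => Real.log (hf (projL dx u w))) zt‖ ^ 2 *
          (ρ (WithLp.toLp 2 ((Wtm dx Vp) *ᵥ zt + (Wpm dx Vs) *ᵥ ys)) / margYs ys) := by exact lsih
    _ = (Cb / 2) * ∫ x : Evec dx,
          ‖gradient (fun x' => Real.log (ρ (jointAppend x' y) / margX x')) x -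
              gradient (fun x' => Real.log (margXYs x' ys / margX x')) x‖ ^ 2 *
            (ρ (jointAppend x y) / margY y) := by rw [EnEq]


/-- the log-Sobolev bound on the output-space term: for a joint density `π(x,y)`
satisfying the subspace LSI with constant `C̄` and any probability density `p` on `ℝ^{d_y}`,
`∬ log(π(y|x) π(y_s) / (π(y_s|x) π(y))) π(x|y) p(y) dx dy
  ≤ (C̄/2) ∬ ‖∇_x log π(y|x) − ∇_x log π(y_s|x)‖² π(x|y) p(y) dx dy`. -/
theorem stmt6 {dx dy s u : ℕ} (Cb : ℝ)
    (ρ : Evec (dx + dy) → ℝ)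
    (hρsmooth : ContDiff ℝ (⊤ : ℕ∞) ρ) (hρpos : ∀ z, 0 < ρ z)
    (hρint : (∫ z, ρ z) = 1)
    (hLSI : SatisfiesSubspaceLSI ρ Cb)
    (Vs : Matrix (Fin dy) (Fin s) ℝ) (Vp : Matrix (Fin dy) (Fin u) ℝ)
    (hV1 : Vsᵀ * Vs = 1) (hV2 : Vpᵀ * Vp = 1) (hV3 : Vsᵀ * Vp = 0)
    (hV4 : Vs * Vsᵀ + Vp * Vpᵀ = 1)
    -- marginal densities
    (margX : Evec dx → ℝ) (hmargX : ∀ x, margX x = ∫ y : Evec dy, ρ (jointAppend x y))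
    (margY : Evec dy → ℝ) (hmargY : ∀ y, margY y = ∫ x : Evec dx, ρ (jointAppend x y))
    (margXYs : Evec dx → Evec s → ℝ)
    (hmargXYs : ∀ x ys, margXYs x ys =
      ∫ yp : Evec u, ρ (jointAppend x (WithLp.toLp 2 (Vs *ᵥ ys + Vp *ᵥ yp))))
    (margYs : Evec s → ℝ) (hmargYs : ∀ ys, margYs ys = ∫ x : Evec dx, margXYs x ys)
    -- positivity and smoothness of all conditional densities involved
    (hmargXpos : ∀ x, 0 < margX x) (hmargYpos : ∀ y, 0 < margY y)
    (hmargXYspos : ∀ x ys, 0 < margXYs x ys) (hmargYspos : ∀ ys, 0 < margYs ys)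
    (hmargXsmooth : ContDiff ℝ (⊤ : ℕ∞) margX)
    (hmargXYssmooth : ∀ ys, ContDiff ℝ (⊤ : ℕ∞) (fun x => margXYs x ys))
    -- smoothness (and positivity) of x ↦ π(x, y_⊥ | y_s)/π(x | y_s) for fixed y
    (hratio : ∀ y : Evec dy,
      ContDiff ℝ (⊤ : ℕ∞) (fun x : Evec dx => ρ (jointAppend x y) / margXYs x (WithLp.toLp 2 (Vsᵀ *ᵥ y))) ∧
      ∀ x : Evec dx, 0 < ρ (jointAppend x y) / margXYs x (WithLp.toLp 2 (Vsᵀ *ᵥ y)))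
    -- the averaging probability density p on ℝ^{d_y}
    (p : Evec dy → ℝ) (hp0 : ∀ y, 0 ≤ p y) (hp1 : (∫ y, p y) = 1)
    -- finiteness of the relevant integrals
    (hint1 : ∀ y : Evec dy, Integrable (fun x : Evec dx =>
      Real.log ((ρ (jointAppend x y) / margX x) * margYs (WithLp.toLp 2 (Vsᵀ *ᵥ y)) /
          ((margXYs x (WithLp.toLp 2 (Vsᵀ *ᵥ y)) / margX x) * margY y)) *
        (ρ (jointAppend x y) / margY y)))
    (hint2 : Integrable (fun y : Evec dy =>
      (∫ x : Evec dx,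
        Real.log ((ρ (jointAppend x y) / margX x) * margYs (WithLp.toLp 2 (Vsᵀ *ᵥ y)) /
            ((margXYs x (WithLp.toLp 2 (Vsᵀ *ᵥ y)) / margX x) * margY y)) *
          (ρ (jointAppend x y) / margY y)) * p y))
    (hint3 : ∀ y : Evec dy, Integrable (fun x : Evec dx =>
      ‖gradient (fun x' : Evec dx => Real.log (ρ (jointAppend x' y) / margX x')) x -
          gradient (fun x' : Evec dx => Real.log (margXYs x' (WithLp.toLp 2 (Vsᵀ *ᵥ y)) / margX x')) x‖ ^ 2 *
        (ρ (jointAppend x y) / margY y)))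
    (hint4 : Integrable (fun y : Evec dy =>
      (∫ x : Evec dx,
        ‖gradient (fun x' : Evec dx => Real.log (ρ (jointAppend x' y) / margX x')) x -
            gradient (fun x' : Evec dx => Real.log (margXYs x' (WithLp.toLp 2 (Vsᵀ *ᵥ y)) / margX x')) x‖ ^ 2 *
          (ρ (jointAppend x y) / margY y)) * p y)) :
    (∫ y : Evec dy,
        (∫ x : Evec dx,
          Real.log ((ρ (jointAppend x y) / margX x) * margYs (WithLp.toLp 2 (Vsᵀ *ᵥ y)) /
              ((margXYs x (WithLp.toLp 2 (Vsᵀ *ᵥ y)) / margX x) * margY y)) *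
            (ρ (jointAppend x y) / margY y)) * p y)
      ≤ (Cb / 2) * ∫ y : Evec dy,
          (∫ x : Evec dx,
            ‖gradient (fun x' : Evec dx => Real.log (ρ (jointAppend x' y) / margX x')) x -
                gradient (fun x' : Evec dx => Real.log (margXYs x' (WithLp.toLp 2 (Vsᵀ *ᵥ y)) / margX x')) x‖ ^ 2 *
              (ρ (jointAppend x y) / margY y)) * p y := by
  have key : ∀ y : Evec dy,
      (∫ x : Evec dx,
        Real.log ((ρ (jointAppend x y) / margX x) * margYs (WithLp.toLp 2 (Vsᵀ *ᵥ y)) /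
            ((margXYs x (WithLp.toLp 2 (Vsᵀ *ᵥ y)) / margX x) * margY y)) *
          (ρ (jointAppend x y) / margY y))
      ≤ (Cb / 2) * ∫ x : Evec dx,
          ‖gradient (fun x' : Evec dx => Real.log (ρ (jointAppend x' y) / margX x')) x -
              gradient (fun x' : Evec dx => Real.log (margXYs x' (WithLp.toLp 2 (Vsᵀ *ᵥ y)) / margX x')) x‖ ^ 2 *
            (ρ (jointAppend x y) / margY y) := fun y =>
    stmt6_key Cb ρ hρsmooth hρpos hLSI Vs Vp hV1 hV2 hV3 hV4 margX margY margXYs margYs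
      y (WithLp.toLp 2 (Vsᵀ *ᵥ y)) (hmargY y) (fun x => hmargXYs x _) (hmargYs _) hmargXpos (hmargYpos y)
      (fun x => hmargXYspos x _) (hmargYspos _) hmargXsmooth (hmargXYssmooth _)
      (hratio y).1 (hratio y).2 (hint1 y) (hint3 y)
  have hIR : Integrable (fun y : Evec dy => (Cb / 2) *
      ((∫ x : Evec dx,
        ‖gradient (fun x' : Evec dx => Real.log (ρ (jointAppend x' y) / margX x')) x -
            gradient (fun x' : Evec dx => Real.log (margXYs x' (WithLp.toLp 2 (Vsᵀ *ᵥ y)) / margX x')) x‖ ^ 2 *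
          (ρ (jointAppend x y) / margY y)) * p y)) := hint4.const_mul _
  calc (∫ y : Evec dy,
        (∫ x : Evec dx,
          Real.log ((ρ (jointAppend x y) / margX x) * margYs (WithLp.toLp 2 (Vsᵀ *ᵥ y)) /
              ((margXYs x (WithLp.toLp 2 (Vsᵀ *ᵥ y)) / margX x) * margY y)) *
            (ρ (jointAppend x y) / margY y)) * p y)
      ≤ ∫ y : Evec dy, (Cb / 2) *
          ((∫ x : Evec dx,
            ‖gradient (fun x' : Evec dx => Real.log (ρ (jointAppend x' y) / margX x')) x -
                gradient (fun x' : Evec dx => Real.log (margXYs x' (WithLp.toLp 2 (Vsᵀ *ᵥ y)) / margX x')) x‖ ^ 2 *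
              (ρ (jointAppend x y) / margY y)) * p y) := by
        refine integral_mono hint2 hIR fun y => ?_
        rw [← mul_assoc]
        exact mul_le_mul_of_nonneg_right (key y) (hp0 y)
    _ = (Cb / 2) * ∫ y : Evec dy,
          (∫ x : Evec dx,
            ‖gradient (fun x' : Evec dx => Real.log (ρ (jointAppend x' y) / margX x')) x -
                gradient (fun x' : Evec dx => Real.log (margXYs x' (WithLp.toLp 2 (Vsᵀ *ᵥ y)) / margX x')) x‖ ^ 2 *
              (ρ (jointAppend x y) / margY y)) * p y := MeasureTheory.integral_const_mul _ _
end
end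

section
/- Let Γ ∈ ℝ^{d×d} be symmetric positive definite, let V_s ∈ ℝ^{d×s} be such that A_s := V_sᵀΓV_s is invertible, let H ∈ ℝ^{d×s} be arbitrary, and let C ∈ ℝ^{d×d} be symmetric. Define D_{V_s}P_s[H] := −H A_s⁻¹ V_sᵀ − V_s A_s⁻¹ Hᵀ + V_s A_s⁻¹ (HᵀΓV_s + V_sᵀΓH) A_s⁻¹ V_sᵀ and P_s := Γ⁻¹ − V_s A_s⁻¹ V_sᵀ. Then Tr[ C · D_{V_s}P_s[H] ] = −2 Tr[ (Γ P_s C V_s A_s⁻¹)ᵀ H ]. -/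
open Matrix

/-- the trace identity
`Tr[C · D_{V_s}P_s[H]] = −2 Tr[(Γ P_s C V_s A_s⁻¹)ᵀ H]` for symmetric `C`, where
`A_s = V_sᵀΓV_s`, `P_s = Γ⁻¹ − V_s A_s⁻¹ V_sᵀ` and
`D_{V_s}P_s[H] = −H A_s⁻¹ V_sᵀ − V_s A_s⁻¹ Hᵀ + V_s A_s⁻¹ (HᵀΓV_s + V_sᵀΓH) A_s⁻¹ V_sᵀ`. -/
theorem stmt12 {d s : ℕ} (Γ : Matrix (Fin d) (Fin d) ℝ) (hΓ : Γ.PosDef)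
    (Vs : Matrix (Fin d) (Fin s) ℝ) (hAs : IsUnit (Vsᵀ * Γ * Vs).det)
    (H : Matrix (Fin d) (Fin s) ℝ)
    (C : Matrix (Fin d) (Fin d) ℝ) (hC : Cᵀ = C) :
    Matrix.trace (C *
      (-(H * (Vsᵀ * Γ * Vs)⁻¹ * Vsᵀ) - Vs * (Vsᵀ * Γ * Vs)⁻¹ * Hᵀ
        + Vs * (Vsᵀ * Γ * Vs)⁻¹ * (Hᵀ * Γ * Vs + Vsᵀ * Γ * H) * (Vsᵀ * Γ * Vs)⁻¹ * Vsᵀ))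
    = -2 * Matrix.trace
        ((Γ * (Γ⁻¹ - Vs * (Vsᵀ * Γ * Vs)⁻¹ * Vsᵀ) * C * Vs * (Vsᵀ * Γ * Vs)⁻¹)ᵀ * H) := by
  have hΓt : Γᵀ = Γ := hΓ.isHermitian
  have hΓ1 : Γ * Γ⁻¹ = 1 := mul_nonsing_inv _ (isUnit_iff_ne_zero.mpr hΓ.det_pos.ne')
  set M := (Vsᵀ * Γ * Vs)⁻¹ with hMdef
  have hM : Mᵀ = M := by
    rw [hMdef, transpose_nonsing_inv, transpose_mul, transpose_mul, transpose_transpose,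
      hΓt, ← Matrix.mul_assoc]
  have e1 : trace (C * (H * M * Vsᵀ)) = trace (M * Vsᵀ * C * H) := by
    simp only [← Matrix.mul_assoc]
    rw [trace_mul_comm]; simp only [← Matrix.mul_assoc]
    rw [trace_mul_comm]; simp only [← Matrix.mul_assoc]
  have e2 : trace (C * (Vs * M * Hᵀ)) = trace (M * Vsᵀ * C * H) := by
    rw [← trace_transpose]
    simp only [transpose_mul, transpose_transpose, hC, hM, ← Matrix.mul_assoc]
    rw [trace_mul_comm]; simp only [← Matrix.mul_assoc]
    rw [trace_mul_comm]; simp only [← Matrix.mul_assoc]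
    rw [trace_mul_comm]; simp only [← Matrix.mul_assoc]
  have e3 : trace (C * (Vs * M * (Hᵀ * Γ * Vs) * M * Vsᵀ))
      = trace (M * Vsᵀ * C * Vs * M * Vsᵀ * Γ * H) := by
    rw [← trace_transpose]
    simp only [transpose_mul, transpose_transpose, hC, hM, hΓt, ← Matrix.mul_assoc]
    rw [trace_mul_comm]; simp only [← Matrix.mul_assoc]
    rw [trace_mul_comm]; simp only [← Matrix.mul_assoc]
    rw [trace_mul_comm]; simp only [← Matrix.mul_assoc]
  have e4 : trace (C * (Vs * M * (Vsᵀ * Γ * H) * M * Vsᵀ))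
      = trace (M * Vsᵀ * C * Vs * M * Vsᵀ * Γ * H) := by
    simp only [← Matrix.mul_assoc]
    rw [trace_mul_comm]; simp only [← Matrix.mul_assoc]
    rw [trace_mul_comm]; simp only [← Matrix.mul_assoc]
  have hrhs : Γ * (Γ⁻¹ - Vs * M * Vsᵀ) * C * Vs * M
      = C * Vs * M - Γ * Vs * M * Vsᵀ * C * Vs * M := by
    rw [Matrix.mul_sub, hΓ1]
    simp only [Matrix.sub_mul, Matrix.one_mul, ← Matrix.mul_assoc]
  rw [hrhs]
  simp only [Matrix.mul_add, Matrix.mul_sub, Matrix.mul_neg, Matrix.add_mul,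
    Matrix.sub_mul, trace_add, trace_sub, trace_neg, transpose_sub, transpose_mul,
    transpose_transpose, hC, hM, hΓt]
  simp only [← Matrix.mul_assoc] at e1 e2 e3 e4 ⊢
  rw [e1, e2]
  rw [e3, e4]
  ring
end
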